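/- arXiv:1911.01300 — 4 statements merged into one kernel-verified Lean document; each statement's English description precedes it below -/
import Mathlib

section
/- Let G = (V,E) be a finite graph, X a Polish space, and μ ∈ P(X^V) absolutely continuous with respect to a product measure μ* = ∏_{v∈V} θ_v. If the density dμ/dμ* factorizes as a product over the 2-cliques of G, i.e., dμ/dμ*(x) = ∏_{K ∈ cl₂(G)} f_K(x_K) for nonnegative measurable f_K, then μ is a second-order Markov random field with respect to G. -/
open MeasureTheory ProbabilityTheory

section GraphDefs

variable {V : Type*}

/-- The (first) outer boundary of a set of vertices. -/
def graphBdry (G : SimpleGraph V) (A : Set V) : Set V :=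
  {u | u ∉ A ∧ ∃ v ∈ A, G.Adj u v}

/-- The second (double) boundary of a set of vertices. -/
def graphBdry2 (G : SimpleGraph V) (A : Set V) : Set V :=
  graphBdry G A ∪ graphBdry G (A ∪ graphBdry G A)

/-- The square graph: vertices at graph distance 1 or 2 are joined. -/
def sqGraph (G : SimpleGraph V) : SimpleGraph V where
  Adj u v := u ≠ v ∧ G.Reachable u v ∧ G.dist u v ≤ 2
  symm := by
    constructor
    rintro u v ⟨h1, h2, h3⟩
    exact ⟨h1.symm, h2.symm, by rwa [SimpleGraph.dist_comm]⟩
  loopless := by constructor; rintro u ⟨h, -⟩; exact h rfl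

/-- A 2-clique: a set of vertices of diameter at most 2. -/
def TwoClique (G : SimpleGraph V) (K : Set V) : Prop :=
  ∀ u ∈ K, ∀ v ∈ K, u ≠ v → G.Reachable u v ∧ G.dist u v ≤ 2

open scoped Classical in
/-- The finite collection of 2-cliques of a graph on a finite vertex set. -/
noncomputable def cl2Finset (G : SimpleGraph V) [Fintype V] : Finset (Finset V) :=
  Finset.univ.filter fun K => TwoClique G (K : Set V)

end GraphDefs

section MRFDefs

variable {V Ω X : Type*} [MeasurableSpace Ω] [StandardBorelSpace Ω] [Nonempty Ω]
  [MeasurableSpace X]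

/-- `Y_A` and `Y_B` are conditionally independent given `Y_S`. -/
def CondIndepCoords (Y : V → Ω → X) (hY : ∀ v, Measurable (Y v)) (μ : Measure Ω)
    [IsFiniteMeasure μ] (A B S : Set V) : Prop :=
  CondIndepFun
    (MeasurableSpace.comap (fun ω => (fun v : S => Y v ω)) MeasurableSpace.pi)
    ((measurable_pi_iff.mpr fun v : S => hY v).comap_le)
    (fun ω => (fun v : A => Y v ω)) (fun ω => (fun v : B => Y v ω)) μ

/-- First-order Markov random field property on a vertex subset `W`. -/
def IsMRF1On (G : SimpleGraph V) (Y : V → Ω → X) (hY : ∀ v, Measurable (Y v))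
    (μ : Measure Ω) [IsFiniteMeasure μ] (W : Set V) : Prop :=
  ∀ A : Set V, A.Finite → A ⊆ W →
    CondIndepCoords Y hY μ A (W \ (A ∪ graphBdry G A)) (graphBdry G A)

/-- Second-order Markov random field property on a vertex subset `W`. -/
def IsMRF2On (G : SimpleGraph V) (Y : V → Ω → X) (hY : ∀ v, Measurable (Y v))
    (μ : Measure Ω) [IsFiniteMeasure μ] (W : Set V) : Prop :=
  ∀ A : Set V, A.Finite → A ⊆ W →
    CondIndepCoords Y hY μ A (W \ (A ∪ graphBdry2 G A)) (graphBdry2 G A)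

end MRFDefs

open scoped ENNReal
open Function

section AuxENNReal

lemma hcAux_div_le_one {a c : ℝ≥0∞} (hac : a ≤ c) : a / c ≤ 1 := by
  rcases eq_or_ne c 0 with rfl | hc0
  · have : a = 0 := le_antisymm hac bot_le
    simp [this]
  · exact ENNReal.div_le_of_le_mul (by simpa using hac)

lemma hcAux_key1 {a c d : ℝ≥0∞} (hac : a ≤ c) (hfin : c * d < ⊤) :
    a / c * (c * d) = a * d := by
  rcases eq_or_ne c 0 with rfl | hc0
  · have : a = 0 := le_antisymm hac bot_le
    simp [this]
  rcases eq_or_ne d 0 with rfl | hd0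
  · simp
  have hct : c ≠ ⊤ := by
    intro hc
    rw [hc, ENNReal.top_mul hd0] at hfin
    exact (lt_irrefl _ hfin).elim
  rw [← mul_assoc, ENNReal.div_mul_cancel hc0 hct]

lemma hcAux_key2 {a b c d : ℝ≥0∞} (hac : a ≤ c) (hbd : b ≤ d) (hfin : c * d < ⊤) :
    a / c * (b / d) * (c * d) = a * b := by
  rcases eq_or_ne c 0 with rfl | hc0
  · have : a = 0 := le_antisymm hac bot_le
    simp [this]
  rcases eq_or_ne d 0 with rfl | hd0
  · have : b = 0 := le_antisymm hbd bot_le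
    simp [this]
  have hct : c ≠ ⊤ := by
    intro hc; rw [hc, ENNReal.top_mul hd0] at hfin; exact (lt_irrefl _ hfin).elim
  have hdt : d ≠ ⊤ := by
    intro hd; rw [hd, ENNReal.mul_top hc0] at hfin; exact (lt_irrefl _ hfin).elim
  calc a / c * (b / d) * (c * d) = (a / c * c) * (b / d * d) := by ring
  _ = a * b := by rw [ENNReal.div_mul_cancel hc0 hct, ENNReal.div_mul_cancel hd0 hdt]

end AuxENNReal

section AuxMarginal
set_option linter.unusedSectionVars false

variable {V X : Type*} [Fintype V] [DecidableEq V] [MeasurableSpace X]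
  (θ : V → Measure X) [∀ v, IsProbabilityMeasure (θ v)]

/-- Factor a function not depending on the integrated coordinates out of a marginal. -/
lemma lmarginal_mul_left' {𝔸 : Finset V} {F F' : (V → X) → ℝ≥0∞}
    (hF' : Measurable F') (hF : ∀ x y : V → X, (∀ v, v ∉ 𝔸 → x v = y v) → F x = F y)
    (x : V → X) :
    (∫⋯∫⁻_𝔸, (fun z => F z * F' z) ∂θ) x = F x * (∫⋯∫⁻_𝔸, F' ∂θ) x := by
  rw [lmarginal, lmarginal]
  have h1 : ∀ y : ↥𝔸 → X, F (updateFinset x 𝔸 y) * F' (updateFinset x 𝔸 y)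
      = F x * F' (updateFinset x 𝔸 y) := fun y => by
    have hFx : F (updateFinset x 𝔸 y) = F x :=
      hF _ _ fun v hv => by simp [updateFinset, hv]
    rw [hFx]
  rw [lintegral_congr h1]
  exact lintegral_const_mul _ (hF'.comp measurable_updateFinset)

lemma lmarginal_dependsOn' {T : Set V} {F : (V → X) → ℝ≥0∞}
    (hF : ∀ x y : V → X, (∀ v ∈ T, x v = y v) → F x = F y) (𝔸 : Finset V)
    {x y : V → X} (hxy : ∀ v ∈ T, v ∉ 𝔸 → x v = y v) :
    (∫⋯∫⁻_𝔸, F ∂θ) x = (∫⋯∫⁻_𝔸, F ∂θ) y := by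
  refine lintegral_congr fun z => hF _ _ fun v hv => ?_
  by_cases h𝔸 : v ∈ 𝔸
  · simp [updateFinset, h𝔸]
  · simp [updateFinset, h𝔸, hxy v hv h𝔸]

end AuxMarginal

section AuxComb

lemma twoClique_subset_of_inter {V : Type*} (G : SimpleGraph V) (A : Set V) {K : Set V}
    (hK : TwoClique G K) {u : V} (huK : u ∈ K) (huA : u ∈ A) :
    K ⊆ A ∪ graphBdry2 G A := by
  intro w hw
  by_cases hwA : w ∈ A
  · exact Or.inl hwA
  have hne : u ≠ w := fun e => hwA (e ▸ huA)
  obtain ⟨hr, hd⟩ := hK u huK w hw hne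
  obtain ⟨p, hp⟩ := hr.exists_walk_length_eq_dist
  right
  cases p with
  | nil => exact absurd rfl hne
  | cons h₁ q =>
    rename_i v
    cases q with
    | nil =>
      exact Or.inl ⟨hwA, u, huA, h₁.symm⟩
    | cons h₂ q₂ =>
      rename_i v₂
      cases q₂ with
      | nil =>
        by_cases hwB : w ∈ graphBdry G A
        · exact Or.inl hwB
        have hvAB : v ∈ A ∪ graphBdry G A := by
          by_cases hvA : v ∈ A
          · exact Or.inl hvA
          · exact Or.inr ⟨hvA, u, huA, h₁.symm⟩
        refine Or.inr ⟨?_, v, hvAB, h₂.symm⟩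
        rintro (h | h)
        · exact hwA h
        · exact hwB h
      | cons h₃ q₃ =>
        exfalso
        simp only [SimpleGraph.Walk.length_cons] at hp
        omega

end AuxComb

section Core

open Function

variable {V X : Type*} [Fintype V]
    [MeasurableSpace X] [StandardBorelSpace X] [Nonempty X]

theorem condIndepCoords_of_factorization
    (θ : V → Measure X) [∀ v, IsProbabilityMeasure (θ v)]
    (A S : Set V) (hAS : Disjoint A S)
    (g h : (V → X) → ℝ≥0∞) (hgm : Measurable g) (hhm : Measurable h)
    (hgloc : ∀ x y : V → X, (∀ v ∈ A ∪ S, x v = y v) → g x = g y)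
    (hhloc : ∀ x y : V → X, (∀ v, v ∉ A → x v = y v) → h x = h y)
    (μ : Measure (V → X)) [IsProbabilityMeasure μ]
    (hμ : μ = (Measure.pi θ).withDensity fun x => g x * h x) :
    CondIndepCoords (fun v x => x v) (fun v => measurable_pi_apply v) μ
      A (Set.univ \ (A ∪ S)) S := by
  classical
  set B : Set V := Set.univ \ (A ∪ S) with hBdef
  set ν : Measure (V → X) := Measure.pi θ with hν
  set ρ : (V → X) → ℝ≥0∞ := fun x => g x * h x with hρdef
  have hρm : Measurable ρ := hgm.mul hhm
  have x₀ : V → X := Classical.arbitrary _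
  -- Finset versions of the three blocks
  set 𝔸 : Finset V := Finset.univ.filter (· ∈ A) with h𝔸def
  set 𝕊 : Finset V := Finset.univ.filter (· ∈ S) with h𝕊def
  set 𝔹 : Finset V := Finset.univ.filter (· ∈ B) with h𝔹def
  have mem𝔸 : ∀ v : V, v ∈ 𝔸 ↔ v ∈ A := fun v => by simp [h𝔸def]
  have mem𝕊 : ∀ v : V, v ∈ 𝕊 ↔ v ∈ S := fun v => by simp [h𝕊def]
  have mem𝔹 : ∀ v : V, v ∈ 𝔹 ↔ v ∈ B := fun v => by simp [h𝔹def]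
  have memB : ∀ v : V, v ∈ B ↔ (v ∉ A ∧ v ∉ S) := fun v => by
    simp [hBdef, not_or]
  have hSnB : ∀ v ∈ S, v ∉ 𝔹 := fun v hv hv' => ((memB v).mp ((mem𝔹 v).mp hv')).2 hv
  have hAnB : ∀ v ∈ A, v ∉ 𝔹 := fun v hv hv' => ((memB v).mp ((mem𝔹 v).mp hv')).1 hv
  have hSnA : ∀ v ∈ S, v ∉ 𝔸 := fun v hv hv' =>
    Set.disjoint_right.mp hAS hv ((mem𝔸 v).mp hv')
  have hBnA : ∀ v ∈ B, v ∉ 𝔸 := fun v hv hv' => ((memB v).mp hv).1 ((mem𝔸 v).mp hv')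
  have hdAB : Disjoint 𝔸 𝔹 := Finset.disjoint_left.mpr fun v hv hv' =>
    hAnB v ((mem𝔸 v).mp hv) hv'
  have hdSA : Disjoint 𝕊 𝔸 := Finset.disjoint_left.mpr fun v hv hv' =>
    hSnA v ((mem𝕊 v).mp hv) hv'
  have hdSB : Disjoint 𝕊 𝔹 := Finset.disjoint_left.mpr fun v hv hv' =>
    hSnB v ((mem𝕊 v).mp hv) hv'
  have huniv : 𝕊 ∪ (𝔸 ∪ 𝔹) = (Finset.univ : Finset V) := by
    ext v
    simp only [Finset.mem_union, Finset.mem_univ, iff_true, mem𝕊 v, mem𝔸 v, mem𝔹 v, memB v]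
    by_cases hv : v ∈ A
    · tauto
    · by_cases hv' : v ∈ S <;> tauto
  -- the marginal densities
  set Gf : (V → X) → ℝ≥0∞ := ∫⋯∫⁻_𝔸, g ∂θ with hGfdef
  set Hf : (V → X) → ℝ≥0∞ := ∫⋯∫⁻_𝔹, h ∂θ with hHfdef
  have hGfm : Measurable Gf := Measurable.lmarginal θ hgm
  have hHfm : Measurable Hf := Measurable.lmarginal θ hhm
  -- dependence of marginals on the S coordinates only
  have hgS : ∀ x y : V → X, (∀ v ∈ S, x v = y v) → Gf x = Gf y := fun x y hxy =>
    lmarginal_dependsOn' θ hgloc 𝔸 fun v hv hv' =>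
      hxy v (hv.elim (fun hA' => absurd ((mem𝔸 v).mpr hA') hv') id)
  have hhS : ∀ x y : V → X, (∀ v ∈ S, x v = y v) → Hf x = Hf y := fun x y hxy => by
    refine lmarginal_dependsOn' θ (T := {v | v ∉ A}) hhloc 𝔹 fun v hv hv' => ?_
    by_cases hvS : v ∈ S
    · exact hxy v hvS
    · exact absurd ((mem𝔹 v).mpr ((memB v).mpr ⟨hv, hvS⟩)) hv'
  -- the master computation
  have M : ∀ P qA qB : (V → X) → ℝ≥0∞, Measurable P → Measurable qA → Measurable qB →
      (∀ x y : V → X, (∀ v ∈ S, x v = y v) → P x = P y) →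
      (∀ x y : V → X, (∀ v ∈ A, x v = y v) → qA x = qA y) →
      (∀ x y : V → X, (∀ v ∈ B, x v = y v) → qB x = qB y) →
      ∫⁻ x, P x * (qA x * qB x) * ρ x ∂ν
        = (∫⋯∫⁻_𝕊, (fun x => P x *
            ((∫⋯∫⁻_𝔸, (fun z => qA z * g z) ∂θ) x
              * (∫⋯∫⁻_𝔹, (fun z => qB z * h z) ∂θ) x)) ∂θ) x₀ := by
    intro P qA qB hPm hqAm hqBm hPS hqAA hqBB
    have hΞm : Measurable fun x => P x * (qA x * qB x) * ρ x :=
      (hPm.mul (hqAm.mul hqBm)).mul hρm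
    have hNBm : Measurable (∫⋯∫⁻_𝔹, (fun z => qB z * h z) ∂θ) :=
      Measurable.lmarginal θ (hqBm.mul hhm)
    have hNBS : ∀ x y : V → X, (∀ v, v ∉ 𝔸 → x v = y v) →
        (∫⋯∫⁻_𝔹, (fun z => qB z * h z) ∂θ) x = (∫⋯∫⁻_𝔹, (fun z => qB z * h z) ∂θ) y := by
      intro x y hxy
      refine lmarginal_dependsOn' θ (T := {v | v ∉ A}) ?_ 𝔹 fun v hv _ => ?_
      · intro x y hxy
        rw [hqBB x y fun v hv => hxy v ((memB v).mp hv).1, hhloc x y hxy]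
      · exact hxy v fun hv' => hv ((mem𝔸 v).mp hv')
    have e0 : ∫⁻ x, P x * (qA x * qB x) * ρ x ∂ν
        = (∫⋯∫⁻_𝕊, (∫⋯∫⁻_𝔸, (∫⋯∫⁻_𝔹, (fun x => P x * (qA x * qB x) * ρ x) ∂θ) ∂θ) ∂θ) x₀ := by
      rw [hν, lintegral_eq_lmarginal_univ x₀, ← huniv,
        lmarginal_union θ _ hΞm (Finset.disjoint_union_right.mpr ⟨hdSA, hdSB⟩),
        lmarginal_union θ _ hΞm hdAB]
    have e1 : (∫⋯∫⁻_𝔹, (fun x => P x * (qA x * qB x) * ρ x) ∂θ)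
        = fun x => (P x * qA x * g x) * (∫⋯∫⁻_𝔹, (fun z => qB z * h z) ∂θ) x := by
      have hre : (fun x => P x * (qA x * qB x) * ρ x)
          = fun z => (fun y => P y * qA y * g y) z * (fun y => qB y * h y) z := by
        funext z; simp only [hρdef]; ring
      funext x
      rw [hre, lmarginal_mul_left' θ (F' := fun y => qB y * h y) (hqBm.mul hhm) ?_ x]
      intro x y hxy
      have hxyS : ∀ v ∈ S, x v = y v := fun v hv => hxy v (hSnB v hv)
      have hxyA : ∀ v ∈ A, x v = y v := fun v hv => hxy v (hAnB v hv)
      rw [hPS x y hxyS, hqAA x y hxyA,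
        hgloc x y fun v hv => hv.elim (hxyA v) (hxyS v)]
    have e2 : (∫⋯∫⁻_𝔸, (fun x => (P x * qA x * g x)
          * (∫⋯∫⁻_𝔹, (fun z => qB z * h z) ∂θ) x) ∂θ)
        = fun x => (P x * (∫⋯∫⁻_𝔹, (fun z => qB z * h z) ∂θ) x)
            * (∫⋯∫⁻_𝔸, (fun z => qA z * g z) ∂θ) x := by
      have hre : (fun x => (P x * qA x * g x) * (∫⋯∫⁻_𝔹, (fun z => qB z * h z) ∂θ) x)
          = fun z => (fun y => P y * (∫⋯∫⁻_𝔹, (fun w => qB w * h w) ∂θ) y) z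
              * (fun y => qA y * g y) z := by
        funext z; ring
      funext x
      rw [hre, lmarginal_mul_left' θ (F' := fun y => qA y * g y) (hqAm.mul hgm) ?_ x]
      intro x y hxy
      have hxyS : ∀ v ∈ S, x v = y v := fun v hv => hxy v (hSnA v hv)
      rw [hPS x y hxyS, hNBS x y hxy]
    rw [e0, e1, e2]
    congr 1
    funext x
    ring
  -- total mass is one
  have hρ1 : ∫⁻ x, ρ x ∂ν = 1 := by
    have h1 : μ Set.univ = 1 := measure_univ
    rw [hμ, withDensity_apply _ MeasurableSet.univ, setLIntegral_univ] at h1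
    exact h1
  have hT0 : (∫⋯∫⁻_𝕊, (fun x => Gf x * Hf x) ∂θ) x₀ = 1 := by
    have m0 := M (fun _ => 1) (fun _ => 1) (fun _ => 1) measurable_const measurable_const
      measurable_const (fun _ _ _ => rfl) (fun _ _ _ => rfl) (fun _ _ _ => rfl)
    simp only [one_mul, mul_one] at m0
    exact m0.symm.trans hρ1
  -- almost-everywhere finiteness of `Gf * Hf` on the S-marginal
  have hae : ∀ᵐ z ∂(Measure.pi fun i : ↥𝕊 => θ i),
      Gf (updateFinset x₀ 𝕊 z) * Hf (updateFinset x₀ 𝕊 z) < ⊤ := by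
    refine ae_lt_top ((hGfm.mul hHfm).comp measurable_updateFinset) ?_
    exact ne_of_eq_of_ne hT0 ENNReal.one_ne_top
  have congrS : ∀ F₁ F₂ : (V → X) → ℝ≥0∞,
      (∀ x, Gf x * Hf x < ⊤ → F₁ x = F₂ x) →
      (∫⋯∫⁻_𝕊, F₁ ∂θ) x₀ = (∫⋯∫⁻_𝕊, F₂ ∂θ) x₀ := fun F₁ F₂ hF =>
    lintegral_congr_ae (hae.mono fun z hz => hF _ hz)
  -- the conditioning σ-algebra
  set pS : (V → X) → (↥S → X) := fun x => fun v : S => x ↑v with hpSdef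
  have hpSm : Measurable pS := measurable_pi_iff.mpr fun v => measurable_pi_apply _
  have hm'le : MeasurableSpace.comap pS MeasurableSpace.pi ≤ MeasurableSpace.pi :=
    hpSm.comap_le
  -- the key conditional-expectation identification
  have main : ∀ D : Set (V → X), MeasurableSet D → ∀ Φ : (V → X) → ℝ≥0∞,
      Measurable Φ → (∀ x, Φ x ≤ 1) →
      (∀ x y : V → X, (∀ v ∈ S, x v = y v) → Φ x = Φ y) →
      (∀ u : Set (↥S → X), MeasurableSet u →
        ∫⁻ x, (pS ⁻¹' u).indicator 1 x * D.indicator 1 x * ρ x ∂ν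
          = ∫⁻ x, (pS ⁻¹' u).indicator 1 x * Φ x * ρ x ∂ν) →
      (fun x => (Φ x).toReal) =ᵐ[μ] μ⟦D | MeasurableSpace.comap pS MeasurableSpace.pi⟧ := by
    intro D hD Φ hΦm hΦle hΦS hint
    have hΦfin : ∀ x, Φ x < ⊤ := fun x => lt_of_le_of_lt (hΦle x) ENNReal.one_lt_top
    refine ae_eq_condExp_of_forall_setIntegral_eq hm'le
      ((integrable_const (1 : ℝ)).indicator hD) ?_ ?_ ?_
    · intro E hE hμE
      refine Integrable.mono' (integrable_const (1 : ℝ))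
        (hΦm.ennreal_toReal.aestronglyMeasurable) (ae_of_all _ fun x => ?_)
      rw [Real.norm_eq_abs, abs_of_nonneg ENNReal.toReal_nonneg]
      calc (Φ x).toReal ≤ (1 : ℝ≥0∞).toReal := ENNReal.toReal_mono ENNReal.one_ne_top (hΦle x)
        _ = 1 := ENNReal.toReal_one
    · intro E hE hμE
      obtain ⟨u, hu, rfl⟩ := hE
      have hEm : MeasurableSet (pS ⁻¹' u) := hpSm hu
      have key : ∫⁻ x in pS ⁻¹' u, Φ x ∂μ = μ (pS ⁻¹' u ∩ D) := by
        rw [hμ, withDensity_apply _ (hEm.inter hD),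
          setLIntegral_withDensity_eq_setLIntegral_mul ν hρm hΦm hEm]
        calc ∫⁻ x in pS ⁻¹' u, (ρ * Φ) x ∂ν
            = ∫⁻ x, (pS ⁻¹' u).indicator (ρ * Φ) x ∂ν := (lintegral_indicator hEm _).symm
          _ = ∫⁻ x, (pS ⁻¹' u).indicator 1 x * Φ x * ρ x ∂ν := by
              refine lintegral_congr fun x => ?_
              by_cases hx : x ∈ pS ⁻¹' u <;>
                simp [hx, mul_comm, mul_left_comm]
          _ = ∫⁻ x, (pS ⁻¹' u).indicator 1 x * D.indicator 1 x * ρ x ∂ν := (hint u hu).symm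
          _ = ∫⁻ x, ((pS ⁻¹' u) ∩ D).indicator ρ x ∂ν := by
              refine lintegral_congr fun x => ?_
              by_cases hx : x ∈ pS ⁻¹' u <;> by_cases hx' : x ∈ D <;> simp [hx, hx']
          _ = ∫⁻ x in (pS ⁻¹' u) ∩ D, ρ x ∂ν := lintegral_indicator (hEm.inter hD) _
      rw [integral_toReal hΦm.aemeasurable (ae_of_all _ fun x => hΦfin x), key,
        setIntegral_indicator hD, setIntegral_const, smul_eq_mul, mul_one, measureReal_def]
    · let ext : (↥S → X) → V → X := fun σ v => if hv : v ∈ S then σ ⟨v, hv⟩ else x₀ v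
      have hext : Measurable ext := by
        refine measurable_pi_iff.mpr fun v => ?_
        by_cases hv : v ∈ S
        · simpa only [ext, dif_pos hv] using measurable_pi_apply (⟨v, hv⟩ : ↥S)
        · simpa only [ext, dif_neg hv] using measurable_const
      refine StronglyMeasurable.aestronglyMeasurable (Measurable.stronglyMeasurable ?_)
      have hcomp : (fun x => (Φ x).toReal) = fun x => (Φ (ext (pS x))).toReal := by
        funext x
        congr 1
        refine hΦS x (ext (pS x)) fun v hv => ?_
        simp [ext, hpSdef, dif_pos hv]
      rw [hcomp]
      exact ((hΦm.comp hext).ennreal_toReal).comp (comap_measurable pS)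
  -- reformulate the goal
  set pA : (V → X) → (↥A → X) := fun x => fun v : A => x ↑v with hpAdef
  set pB : (V → X) → (↥B → X) := fun x => fun v : B => x ↑v with hpBdef
  have hpAm : Measurable pA := measurable_pi_iff.mpr fun v => measurable_pi_apply _
  have hpBm : Measurable pB := measurable_pi_iff.mpr fun v => measurable_pi_apply _
  show CondIndepFun (MeasurableSpace.comap pS MeasurableSpace.pi) hm'le pA pB μ
  rw [condIndepFun_iff_condExp_inter_preimage_eq_mul hpAm hpBm]
  intro s t hs ht
  set DA : Set (V → X) := pA ⁻¹' s with hDAdef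
  set DB : Set (V → X) := pB ⁻¹' t with hDBdef
  have hDAm : MeasurableSet DA := hpAm hs
  have hDBm : MeasurableSet DB := hpBm ht
  set IA : (V → X) → ℝ≥0∞ := DA.indicator 1 with hIAdef
  set IB : (V → X) → ℝ≥0∞ := DB.indicator 1 with hIBdef
  have hIAm : Measurable IA := measurable_one.indicator hDAm
  have hIBm : Measurable IB := measurable_one.indicator hDBm
  have hIAle : ∀ x, IA x ≤ 1 := fun x => by
    rw [hIAdef]; by_cases hx : x ∈ DA <;> simp [hx]
  have hIBle : ∀ x, IB x ≤ 1 := fun x => by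
    rw [hIBdef]; by_cases hx : x ∈ DB <;> simp [hx]
  have hIAA : ∀ x y : V → X, (∀ v ∈ A, x v = y v) → IA x = IA y := by
    intro x y hxy
    have hxy' : pA x = pA y := funext fun v => hxy v v.2
    rw [hIAdef]
    simp only [hDAdef, Set.indicator_apply, Set.mem_preimage, hxy', Pi.one_apply]
  have hIBB : ∀ x y : V → X, (∀ v ∈ B, x v = y v) → IB x = IB y := by
    intro x y hxy
    have hxy' : pB x = pB y := funext fun v => hxy v v.2
    rw [hIBdef]
    simp only [hDBdef, Set.indicator_apply, Set.mem_preimage, hxy', Pi.one_apply]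
  have hIUm : ∀ u : Set (↥S → X), MeasurableSet u →
      Measurable ((pS ⁻¹' u).indicator (1 : (V → X) → ℝ≥0∞)) :=
    fun u hu => measurable_one.indicator (hpSm hu)
  have hIUS : ∀ (u : Set (↥S → X)) (x y : V → X), (∀ v ∈ S, x v = y v) →
      (pS ⁻¹' u).indicator (1 : (V → X) → ℝ≥0∞) x = (pS ⁻¹' u).indicator 1 y := by
    intro u x y hxy
    have hxy' : pS x = pS y := funext fun v => hxy v v.2
    simp only [Set.indicator_apply, Set.mem_preimage, hxy', Pi.one_apply]
  set NA : (V → X) → ℝ≥0∞ := ∫⋯∫⁻_𝔸, (fun z => IA z * g z) ∂θ with hNAdef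
  set NB : (V → X) → ℝ≥0∞ := ∫⋯∫⁻_𝔹, (fun z => IB z * h z) ∂θ with hNBdef
  have hNAm : Measurable NA := Measurable.lmarginal θ (hIAm.mul hgm)
  have hNBm : Measurable NB := Measurable.lmarginal θ (hIBm.mul hhm)
  have hNAS : ∀ x y : V → X, (∀ v ∈ S, x v = y v) → NA x = NA y := by
    intro x y hxy
    rw [hNAdef]
    refine lmarginal_dependsOn' θ (T := A ∪ S) ?_ 𝔸 fun v hv hv' => ?_
    · intro x y hxy
      rw [hIAA x y fun v hv => hxy v (Or.inl hv), hgloc x y hxy]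
    · exact hxy v (hv.elim (fun hA' => absurd ((mem𝔸 v).mpr hA') hv') id)
  have hNBS : ∀ x y : V → X, (∀ v ∈ S, x v = y v) → NB x = NB y := by
    intro x y hxy
    rw [hNBdef]
    refine lmarginal_dependsOn' θ (T := {v | v ∉ A}) ?_ 𝔹 fun v hv hv' => ?_
    · intro x y hxy
      rw [hIBB x y fun v hv => hxy v ((memB v).mp hv).1, hhloc x y hxy]
    · by_cases hvS : v ∈ S
      · exact hxy v hvS
      · exact absurd ((mem𝔹 v).mpr ((memB v).mpr ⟨hv, hvS⟩)) hv'
  have hNAle : ∀ x, NA x ≤ Gf x := by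
    intro x
    rw [hNAdef, hGfdef]
    refine lmarginal_mono (fun z => ?_) x
    calc IA z * g z ≤ 1 * g z := mul_le_mul_left (hIAle z) _
      _ = g z := one_mul _
  have hNBle : ∀ x, NB x ≤ Hf x := by
    intro x
    rw [hNBdef, hHfdef]
    refine lmarginal_mono (fun z => ?_) x
    calc IB z * h z ≤ 1 * h z := mul_le_mul_left (hIBle z) _
      _ = h z := one_mul _
  set ΦA : (V → X) → ℝ≥0∞ := fun x => NA x / Gf x with hΦAdef
  set ΦB : (V → X) → ℝ≥0∞ := fun x => NB x / Hf x with hΦBdef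
  have hΦAm : Measurable ΦA := hNAm.div hGfm
  have hΦBm : Measurable ΦB := hNBm.div hHfm
  have hΦAle : ∀ x, ΦA x ≤ 1 := fun x => hcAux_div_le_one (hNAle x)
  have hΦBle : ∀ x, ΦB x ≤ 1 := fun x => hcAux_div_le_one (hNBle x)
  have hΦAS : ∀ x y : V → X, (∀ v ∈ S, x v = y v) → ΦA x = ΦA y := by
    intro x y hxy
    show NA x / Gf x = NA y / Gf y
    rw [hNAS x y hxy, hgS x y hxy]
  have hΦBS : ∀ x y : V → X, (∀ v ∈ S, x v = y v) → ΦB x = ΦB y := by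
    intro x y hxy
    show NB x / Hf x = NB y / Hf y
    rw [hNBS x y hxy, hhS x y hxy]
  have hkeyA : ∀ x, Gf x * Hf x < ⊤ → ΦA x * (Gf x * Hf x) = NA x * Hf x :=
    fun x hfin => hcAux_key1 (hNAle x) hfin
  have hkeyB : ∀ x, Gf x * Hf x < ⊤ → ΦB x * (Gf x * Hf x) = Gf x * NB x := by
    intro x hfin
    rw [mul_comm (Gf x) (Hf x)] at hfin ⊢
    show NB x / Hf x * (Hf x * Gf x) = Gf x * NB x
    rw [hcAux_key1 (hNBle x) hfin, mul_comm]
  have hkeyAB : ∀ x, Gf x * Hf x < ⊤ → ΦA x * ΦB x * (Gf x * Hf x) = NA x * NB x :=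
    fun x hfin => hcAux_key2 (hNAle x) (hNBle x) hfin
  -- the three lintegral identities
  have hintA : ∀ u : Set (↥S → X), MeasurableSet u →
      ∫⁻ x, (pS ⁻¹' u).indicator 1 x * IA x * ρ x ∂ν
        = ∫⁻ x, (pS ⁻¹' u).indicator 1 x * ΦA x * ρ x ∂ν := by
    intro u hu
    have m1 := M ((pS ⁻¹' u).indicator 1) IA (fun _ => 1) (hIUm u hu) hIAm
      measurable_const (hIUS u) hIAA (fun _ _ _ => rfl)
    have m2 := M (fun x => (pS ⁻¹' u).indicator 1 x * ΦA x) (fun _ => 1) (fun _ => 1)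
      ((hIUm u hu).mul hΦAm) measurable_const measurable_const
      (fun x y hxy => by
        show (pS ⁻¹' u).indicator 1 x * ΦA x = (pS ⁻¹' u).indicator 1 y * ΦA y
        rw [hIUS u x y hxy, hΦAS x y hxy])
      (fun _ _ _ => rfl)
      (fun _ _ _ => rfl)
    simp only [one_mul, mul_one] at m1 m2
    calc ∫⁻ x, (pS ⁻¹' u).indicator 1 x * IA x * ρ x ∂ν
        = (∫⋯∫⁻_𝕊, (fun x => (pS ⁻¹' u).indicator 1 x * (NA x * Hf x)) ∂θ) x₀ := m1
      _ = (∫⋯∫⁻_𝕊, (fun x => (pS ⁻¹' u).indicator 1 x * ΦA x * (Gf x * Hf x)) ∂θ) x₀ := by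
          refine congrS _ _ fun x hfin => ?_
          rw [mul_assoc, hkeyA x hfin]
      _ = ∫⁻ x, (pS ⁻¹' u).indicator 1 x * ΦA x * ρ x ∂ν := m2.symm
  have hintB : ∀ u : Set (↥S → X), MeasurableSet u →
      ∫⁻ x, (pS ⁻¹' u).indicator 1 x * IB x * ρ x ∂ν
        = ∫⁻ x, (pS ⁻¹' u).indicator 1 x * ΦB x * ρ x ∂ν := by
    intro u hu
    have m1 := M ((pS ⁻¹' u).indicator 1) (fun _ => 1) IB (hIUm u hu) measurable_const
      hIBm (hIUS u) (fun _ _ _ => rfl) hIBB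
    have m2 := M (fun x => (pS ⁻¹' u).indicator 1 x * ΦB x) (fun _ => 1) (fun _ => 1)
      ((hIUm u hu).mul hΦBm) measurable_const measurable_const
      (fun x y hxy => by
        show (pS ⁻¹' u).indicator 1 x * ΦB x = (pS ⁻¹' u).indicator 1 y * ΦB y
        rw [hIUS u x y hxy, hΦBS x y hxy])
      (fun _ _ _ => rfl)
      (fun _ _ _ => rfl)
    simp only [one_mul, mul_one] at m1 m2
    calc ∫⁻ x, (pS ⁻¹' u).indicator 1 x * IB x * ρ x ∂ν
        = (∫⋯∫⁻_𝕊, (fun x => (pS ⁻¹' u).indicator 1 x * (Gf x * NB x)) ∂θ) x₀ := m1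
      _ = (∫⋯∫⁻_𝕊, (fun x => (pS ⁻¹' u).indicator 1 x * ΦB x * (Gf x * Hf x)) ∂θ) x₀ := by
          refine congrS _ _ fun x hfin => ?_
          rw [mul_assoc, hkeyB x hfin]
      _ = ∫⁻ x, (pS ⁻¹' u).indicator 1 x * ΦB x * ρ x ∂ν := m2.symm
  have hintAB : ∀ u : Set (↥S → X), MeasurableSet u →
      ∫⁻ x, (pS ⁻¹' u).indicator 1 x * (DA ∩ DB).indicator 1 x * ρ x ∂ν
        = ∫⁻ x, (pS ⁻¹' u).indicator 1 x * (ΦA x * ΦB x) * ρ x ∂ν := by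
    intro u hu
    have m1 := M ((pS ⁻¹' u).indicator 1) IA IB (hIUm u hu) hIAm hIBm (hIUS u) hIAA hIBB
    have m2 := M (fun x => (pS ⁻¹' u).indicator 1 x * (ΦA x * ΦB x)) (fun _ => 1)
      (fun _ => 1) ((hIUm u hu).mul (hΦAm.mul hΦBm)) measurable_const measurable_const
      (fun x y hxy => by
        show (pS ⁻¹' u).indicator 1 x * (ΦA x * ΦB x) = (pS ⁻¹' u).indicator 1 y * (ΦA y * ΦB y)
        rw [hIUS u x y hxy, hΦAS x y hxy, hΦBS x y hxy])
      (fun _ _ _ => rfl)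
      (fun _ _ _ => rfl)
    simp only [one_mul, mul_one] at m2
    calc ∫⁻ x, (pS ⁻¹' u).indicator 1 x * (DA ∩ DB).indicator 1 x * ρ x ∂ν
        = ∫⁻ x, (pS ⁻¹' u).indicator 1 x * (IA x * IB x) * ρ x ∂ν := by
          refine lintegral_congr fun x => ?_
          have hii : (DA ∩ DB).indicator (1 : (V → X) → ℝ≥0∞) x = IA x * IB x := by
            rw [hIAdef, hIBdef]
            exact congrFun Set.inter_indicator_one x
          rw [hii]
      _ = (∫⋯∫⁻_𝕊, (fun x => (pS ⁻¹' u).indicator 1 x * (NA x * NB x)) ∂θ) x₀ := m1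
      _ = (∫⋯∫⁻_𝕊, (fun x => (pS ⁻¹' u).indicator 1 x * (ΦA x * ΦB x) * (Gf x * Hf x)) ∂θ)
            x₀ := by
          refine congrS _ _ fun x hfin => ?_
          rw [mul_assoc, hkeyAB x hfin]
      _ = ∫⁻ x, (pS ⁻¹' u).indicator 1 x * (ΦA x * ΦB x) * ρ x ∂ν := m2.symm
  -- put everything together
  have hA := main DA hDAm ΦA hΦAm hΦAle hΦAS hintA
  have hB := main DB hDBm ΦB hΦBm hΦBle hΦBS hintB
  have hAB := main (DA ∩ DB) (hDAm.inter hDBm) (fun x => ΦA x * ΦB x) (hΦAm.mul hΦBm)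
    (fun x => mul_le_one' (hΦAle x) (hΦBle x))
    (fun x y hxy => by
      show ΦA x * ΦB x = ΦA y * ΦB y
      rw [hΦAS x y hxy, hΦBS x y hxy])
    hintAB
  refine hAB.symm.trans ?_
  have e : (fun x => (ΦA x * ΦB x).toReal) = fun x => (ΦA x).toReal * (ΦB x).toReal :=
    funext fun x => ENNReal.toReal_mul
  show (fun x => (ΦA x * ΦB x).toReal) =ᵐ[μ] _
  rw [e]
  exact hA.mul hB

end Core


/-- Second-order Hammersley–Clifford, factorization implies 2MRF: if the density of `μ`
with respect to the product measure `Measure.pi θ` factorizes over the 2-cliques of a finite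
graph `G`, then `μ` is a second-order Markov random field with respect to `G`. -/
theorem isMRF2_of_twoClique_factorization {V X : Type*} [Fintype V]
    [MeasurableSpace X] [StandardBorelSpace X] [Nonempty X]
    (G : SimpleGraph V) (θ : V → Measure X) [∀ v, IsProbabilityMeasure (θ v)]
    (f : Finset V → (V → X) → ℝ≥0∞)
    (hfmeas : ∀ K, Measurable (f K))
    (hfloc : ∀ K, ∀ x y : V → X, (∀ v ∈ K, x v = y v) → f K x = f K y)
    (μ : Measure (V → X)) [IsProbabilityMeasure μ]
    (hμ : μ = (Measure.pi θ).withDensity (fun x => ∏ K ∈ cl2Finset G, f K x)) :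
    IsMRF2On G (fun v x => x v) (fun v => measurable_pi_apply v) μ Set.univ := by
  classical
  intro A _ _
  have hAS : Disjoint A (graphBdry2 G A) := by
    rw [Set.disjoint_left]
    intro v hv hv'
    rcases hv' with hb | hb
    · exact hb.1 hv
    · exact hb.1 (Or.inl hv)
  have hcl2 : ∀ K : Finset V, K ∈ cl2Finset G → TwoClique G (K : Set V) := by
    intro K hK
    simpa [cl2Finset] using hK
  refine condIndepCoords_of_factorization θ A (graphBdry2 G A) hAS
    (fun x => ∏ K ∈ (cl2Finset G).filter (fun K => ∃ u ∈ K, u ∈ A), f K x)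
    (fun x => ∏ K ∈ (cl2Finset G).filter (fun K => ¬ ∃ u ∈ K, u ∈ A), f K x)
    (Finset.measurable_prod _ fun K _ => hfmeas K)
    (Finset.measurable_prod _ fun K _ => hfmeas K)
    ?_ ?_ μ ?_
  · intro x y hxy
    refine Finset.prod_congr rfl fun K hK => ?_
    rw [Finset.mem_filter] at hK
    obtain ⟨hKcl, u, huK, huA⟩ := hK
    have hsub : (K : Set V) ⊆ A ∪ graphBdry2 G A :=
      twoClique_subset_of_inter G A (hcl2 K hKcl) (Finset.mem_coe.mpr huK) huA
    exact hfloc K x y fun v hv => hxy v (hsub (Finset.mem_coe.mpr hv))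
  · intro x y hxy
    refine Finset.prod_congr rfl fun K hK => ?_
    rw [Finset.mem_filter] at hK
    exact hfloc K x y fun v hv => hxy v fun hvA => hK.2 ⟨v, hv, hvA⟩
  · rw [hμ]
    congr 1
    funext x
    exact (Finset.prod_filter_mul_prod_filter_not (cl2Finset G) _ _).symm
end

section
/- Let G = (V,E) be a finite graph, X a Polish space, and μ ∈ P(X^V) with strictly positive density dμ/dμ* with respect to a product measure μ* = ∏_{v∈V} θ_v. If μ is a second-order Markov random field with respect to G, then the density factorizes over the 2-cliques of G: dμ/dμ*(x) = ∏_{K∈cl₂(G)} f_K(x_K) for some nonnegative measurable functions f_K. -/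
open MeasureTheory ProbabilityTheory

open scoped ENNReal

set_option linter.unusedSectionVars false
set_option maxHeartbeats 1000000

namespace HC2

open Finset Function


variable {V X : Type*} [Fintype V] [DecidableEq V] [MeasurableSpace X]
  {θ : V → Measure X} [∀ v, IsProbabilityMeasure (θ v)]


theorem lmarginal_one (s : Finset V) :
    (∫⋯∫⁻_s, (fun _ => (1 : ℝ≥0∞)) ∂θ) = fun _ => 1 := by
  funext x; simp [lmarginal]

theorem lmarginal_mul_left (s : Finset V) {g h : (V → X) → ℝ≥0∞} (hh : Measurable h)
    (hg : ∀ x y : V → X, (∀ v, v ∉ s → x v = y v) → g x = g y) :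
    (∫⋯∫⁻_s, (fun x => g x * h x) ∂θ) = fun x => g x * (∫⋯∫⁻_s, h ∂θ) x := by
  funext x
  rw [lmarginal, lmarginal]
  have : ∀ y : ∀ i : s, X, g (updateFinset x s y) = g x := by
    intro y
    refine hg _ _ fun v hv => ?_
    simp [updateFinset, hv]
  simp_rw [this]
  exact lintegral_const_mul _ (hh.comp measurable_updateFinset)


theorem lmarginal_pos {d : (V → X) → ℝ≥0∞} (hd : Measurable d) (hdpos : ∀ x, 0 < d x)
    (s : Finset V) (x : V → X) :
    0 < (∫⋯∫⁻_s, d ∂θ) x := by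
  rw [lmarginal, lintegral_pos_iff_support]
  · have : (Function.support fun y : ∀ i : s, X => d (updateFinset x s y)) = Set.univ := by
      ext y; simp [Function.support, (hdpos _).ne']
    rw [this]
    simp
  · exact hd.comp measurable_updateFinset

theorem lintegral_mul_eq_lintegral_mul_lmarginal (s : Finset V) {g h : (V → X) → ℝ≥0∞}
    (hg : Measurable g) (hh : Measurable h)
    (hloc : ∀ x y : V → X, (∀ v ∈ s, x v = y v) → g x = g y) :
    ∫⁻ x, g x * h x ∂(Measure.pi θ) = ∫⁻ x, g x * (∫⋯∫⁻_sᶜ, h ∂θ) x ∂(Measure.pi θ) := by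
  have hloc' : ∀ x y : V → X, (∀ v, v ∉ sᶜ → x v = y v) → g x = g y := by
    intro x y hxy
    exact hloc x y fun v hv => hxy v (by simp [hv])
  have hH : ∀ x y : V → X, (∀ v, v ∉ sᶜ → x v = y v) → (∫⋯∫⁻_sᶜ, h ∂θ) x = (∫⋯∫⁻_sᶜ, h ∂θ) y := by
    intro x y hxy
    exact lmarginal_congr _ _ fun v hv => hxy v hv
  have hHm : Measurable (∫⋯∫⁻_sᶜ, h ∂θ) := hh.lmarginal _
  obtain ⟨x₀⟩ : Nonempty (V → X) := by
    rcases isEmpty_or_nonempty X with hX | _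
    · rcases isEmpty_or_nonempty V with hV | hV
      · exact ⟨fun v => (IsEmpty.elim hV v)⟩
      · exfalso
        have : (θ (Classical.arbitrary V)) Set.univ = 1 := measure_univ
        simp [Set.univ_eq_empty_iff.mpr hX] at this
    · exact ⟨fun _ => Classical.arbitrary X⟩
  rw [lintegral_eq_lmarginal_univ (μ := θ) x₀, lintegral_eq_lmarginal_univ (μ := θ) x₀]
  have hsplit : (Finset.univ : Finset V) = s ∪ sᶜ := (Finset.union_compl s).symm
  rw [hsplit, lmarginal_union θ (fun x => g x * h x) (hg.mul hh) disjoint_compl_right,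
    lmarginal_union θ (fun x => g x * (∫⋯∫⁻_sᶜ, h ∂θ) x) (hg.mul (hHm)) disjoint_compl_right]
  have h1 : (∫⋯∫⁻_sᶜ, (fun x => g x * h x) ∂θ) = fun x => g x * (∫⋯∫⁻_sᶜ, h ∂θ) x :=
    lmarginal_mul_left _ hh hloc'
  have h2 : (∫⋯∫⁻_sᶜ, (fun x => g x * (∫⋯∫⁻_sᶜ, h ∂θ) x) ∂θ)
      = fun x => g x * (∫⋯∫⁻_sᶜ, h ∂θ) x := by
    have hgH : ∀ x y : V → X, (∀ v, v ∉ sᶜ → x v = y v) →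
        g x * (∫⋯∫⁻_sᶜ, h ∂θ) x = g y * (∫⋯∫⁻_sᶜ, h ∂θ) y := by
      intro x y hxy
      rw [hloc' x y hxy, hH x y hxy]
    have := lmarginal_mul_left (θ := θ) sᶜ (g := fun x => g x * (∫⋯∫⁻_sᶜ, h ∂θ) x)
      (h := fun _ => (1:ℝ≥0∞)) measurable_const hgH
    simpa [lmarginal_one] using this
  rw [h1, h2]

/-- The conditional expectation of an indicator, given the coordinates in `S`,
is given by the ratio of marginal densities. -/
theorem condexp_indicator_formula [Nonempty X]
    {d : (V → X) → ℝ≥0∞} (hd : Measurable d)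
    (hd1 : ∫⁻ x, d x ∂(Measure.pi θ) = 1)
    (S : Set V) (Sf : Finset V) (hSf : ∀ v, v ∈ Sf ↔ v ∈ S)
    {F : Set (V → X)} (hF : MeasurableSet F) :
    (fun x => (((∫⋯∫⁻_Sfᶜ, (fun y => F.indicator (fun _ => (1:ℝ≥0∞)) y * d y) ∂θ) x) /
        ((∫⋯∫⁻_Sfᶜ, d ∂θ) x)).toReal)
      =ᵐ[(Measure.pi θ).withDensity d]
    ((Measure.pi θ).withDensity d)[F.indicator (fun _ => (1:ℝ)) |
      MeasurableSpace.comap (fun x (v : S) => x (v : V)) MeasurableSpace.pi] := by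
  set π : Measure (V → X) := Measure.pi θ with hπ
  set μ : Measure (V → X) := π.withDensity d with hμdef
  haveI : IsProbabilityMeasure μ := by
    constructor
    rw [hμdef, withDensity_apply _ MeasurableSet.univ, Measure.restrict_univ]
    exact hd1
  have hprojm : Measurable (fun x : V → X => (fun v : S => x (v : V))) :=
    measurable_pi_iff.mpr fun v : S => measurable_pi_apply (v : V)
  have hm' : MeasurableSpace.comap (fun x (v : S) => x (v : V)) MeasurableSpace.pi
      ≤ MeasurableSpace.pi := hprojm.comap_le
  haveI : SigmaFinite (μ.trim hm') := by infer_instance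
  set mF : (V → X) → ℝ≥0∞ := ∫⋯∫⁻_Sfᶜ, (fun y => F.indicator (fun _ => (1:ℝ≥0∞)) y * d y) ∂θ
    with hmFdef
  set DS : (V → X) → ℝ≥0∞ := ∫⋯∫⁻_Sfᶜ, d ∂θ with hDSdef
  set pF : (V → X) → ℝ≥0∞ := fun x => mF x / DS x with hpFdef
  set g : (V → X) → ℝ := fun x => (pF x).toReal with hgdef
  have hindm : Measurable (F.indicator (fun _ : V → X => (1:ℝ≥0∞))) :=
    measurable_const.indicator hF
  have hmFm : Measurable mF := (hindm.mul hd).lmarginal _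
  have hDSm : Measurable DS := hd.lmarginal _
  have hpFm : Measurable pF := hmFm.div hDSm
  have hgm : Measurable g := hpFm.ennreal_toReal
  have hmFle : ∀ x, mF x ≤ DS x := by
    intro x
    refine lmarginal_mono (fun y => ?_) x
    by_cases hy : y ∈ F <;> simp [hy]
  have hpFle : ∀ x, pF x ≤ 1 := by
    intro x
    exact ENNReal.div_le_of_le_mul (by rw [one_mul]; exact hmFle x)
  -- local dependence on Sf-coordinates
  have hlocmarg : ∀ (k : (V → X) → ℝ≥0∞), ∀ x y : V → X, (∀ v ∈ Sf, x v = y v) →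
      (∫⋯∫⁻_Sfᶜ, k ∂θ) x = (∫⋯∫⁻_Sfᶜ, k ∂θ) y := by
    intro k x y hxy
    exact lmarginal_congr _ _ fun v hv => hxy v (by simpa using hv)
  have hlocmF : ∀ x y : V → X, (∀ v ∈ Sf, x v = y v) → mF x = mF y :=
    fun x y hxy => hlocmarg _ x y hxy
  have hlocDS : ∀ x y : V → X, (∀ v ∈ Sf, x v = y v) → DS x = DS y :=
    fun x y hxy => hlocmarg _ x y hxy
  have hDS1 : ∫⁻ x, DS x ∂π = 1 := by
    have := lintegral_mul_eq_lintegral_mul_lmarginal (θ := θ) Sf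
      (g := fun _ => (1:ℝ≥0∞)) measurable_const hd (fun _ _ _ => rfl)
    rw [← hd1]; simpa using this.symm
  have hDSfin : ∀ᵐ x ∂π, DS x ≠ ∞ :=
    (ae_lt_top hDSm (by rw [hDS1]; exact ENNReal.one_ne_top)).mono fun x hx => hx.ne
  -- integrability
  have hgint : Integrable g μ := by
    refine integrable_toReal_of_lintegral_ne_top hpFm.aemeasurable ?_
    refine ne_top_of_le_ne_top ?_ (lintegral_mono fun x => hpFle x)
    simp
  have hf1 : Integrable (F.indicator (fun _ : V → X => (1:ℝ))) μ :=
    (integrable_const (1:ℝ)).indicator hF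
  -- the defining integral property
  have hg_eq : ∀ s : Set (V → X),
      MeasurableSet[MeasurableSpace.comap (fun x (v : S) => x (v : V)) MeasurableSpace.pi] s
      → μ s < ∞ →
      ∫ x in s, g x ∂μ = ∫ x in s, F.indicator (fun _ => (1:ℝ)) x ∂μ := by
    rintro s ⟨Bs, hBs, rfl⟩ -
    set s : Set (V → X) := (fun x (v : S) => x (v : V)) ⁻¹' Bs with hsdef
    have hsm : MeasurableSet s := hprojm hBs
    have hsloc : ∀ x y : V → X, (∀ v ∈ Sf, x v = y v) →
        s.indicator (fun _ => (1:ℝ≥0∞)) x = s.indicator (fun _ => (1:ℝ≥0∞)) y := by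
      intro x y hxy
      have : (fun v : S => x (v : V)) = fun v : S => y (v : V) := by
        funext v
        exact hxy v ((hSf _).mpr v.2)
      by_cases hx : x ∈ s
      · have hy : y ∈ s := by rwa [hsdef, Set.mem_preimage, ← this]
        simp [hx, hy]
      · have hy : y ∉ s := by rwa [hsdef, Set.mem_preimage, ← this]
        simp [hx, hy]
    -- LHS to lintegral
    have hLHS : ∫ x in s, g x ∂μ = (∫⁻ x in s, pF x ∂μ).toReal := by
      rw [hgdef]
      refine integral_toReal (hpFm.aemeasurable.restrict) ?_
      exact Filter.Eventually.of_forall fun x => lt_of_le_of_lt (hpFle x) ENNReal.one_lt_top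
    -- RHS to measure
    have hRHS : ∫ x in s, F.indicator (fun _ => (1:ℝ)) x ∂μ = (μ (F ∩ s)).toReal := by
      rw [setIntegral_indicator hF, setIntegral_const, smul_eq_mul, mul_one, Set.inter_comm,
        measureReal_def]
    rw [hLHS, hRHS]
    congr 1
    -- now an ℝ≥0∞ identity
    have e1 : ∫⁻ x in s, pF x ∂μ = ∫⁻ x in s, d x * pF x ∂π := by
      rw [hμdef, restrict_withDensity hsm,
        lintegral_withDensity_eq_lintegral_mul _ hd hpFm]
      rfl
    have e2 : ∫⁻ x in s, d x * pF x ∂π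
        = ∫⁻ x, (s.indicator (fun _ => (1:ℝ≥0∞)) x * pF x) * d x ∂π := by
      rw [← lintegral_indicator hsm]
      congr 1
      funext x
      by_cases hx : x ∈ s <;> simp [hx, mul_comm]
    have hgg : Measurable fun x => s.indicator (fun _ => (1:ℝ≥0∞)) x * pF x :=
      (measurable_const.indicator hsm).mul hpFm
    have hggloc : ∀ x y : V → X, (∀ v ∈ Sf, x v = y v) →
        s.indicator (fun _ => (1:ℝ≥0∞)) x * pF x = s.indicator (fun _ => (1:ℝ≥0∞)) y * pF y := by
      intro x y hxy
      rw [hsloc x y hxy, hpFdef]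
      simp only
      rw [hlocmF x y hxy, hlocDS x y hxy]
    have e3 : ∫⁻ x, (s.indicator (fun _ => (1:ℝ≥0∞)) x * pF x) * d x ∂π
        = ∫⁻ x, (s.indicator (fun _ => (1:ℝ≥0∞)) x * pF x) * DS x ∂π :=
      lintegral_mul_eq_lintegral_mul_lmarginal Sf hgg hd hggloc
    have e4 : ∫⁻ x, (s.indicator (fun _ => (1:ℝ≥0∞)) x * pF x) * DS x ∂π
        = ∫⁻ x, s.indicator (fun _ => (1:ℝ≥0∞)) x * mF x ∂π := by
      refine lintegral_congr_ae (hDSfin.mono fun x hx => ?_)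
      rcases eq_or_ne (DS x) 0 with h0 | h0
      · have : mF x = 0 := le_antisymm (h0 ▸ hmFle x) (zero_le)
        simp [hpFdef, h0, this]
      · rw [hpFdef]
        simp only
        rw [mul_assoc, ENNReal.div_mul_cancel h0 hx]
    have e5 : ∫⁻ x, s.indicator (fun _ => (1:ℝ≥0∞)) x * mF x ∂π
        = ∫⁻ x, s.indicator (fun _ => (1:ℝ≥0∞)) x *
            (F.indicator (fun _ => (1:ℝ≥0∞)) x * d x) ∂π := by
      refine (lintegral_mul_eq_lintegral_mul_lmarginal Sf
        (measurable_const.indicator hsm) (hindm.mul hd) ?_).symm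
      intro x y hxy
      exact hsloc x y hxy
    have e6 : ∫⁻ x, s.indicator (fun _ => (1:ℝ≥0∞)) x *
        (F.indicator (fun _ => (1:ℝ≥0∞)) x * d x) ∂π = μ (F ∩ s) := by
      rw [hμdef, withDensity_apply _ (hF.inter hsm), ← lintegral_indicator (hF.inter hsm)]
      congr 1
      funext x
      by_cases hxF : x ∈ F <;> by_cases hxs : x ∈ s <;>
        simp [hxF, hxs, Set.indicator, Set.mem_inter_iff]
    rw [e1, e2, e3, e4, e5, e6]
  -- m'-measurability
  have hgm' : AEStronglyMeasurable[
      (MeasurableSpace.comap (fun x (v : S) => x (v : V)) MeasurableSpace.pi)] g μ := by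
    classical
    set ext0 : (S → X) → (V → X) := fun z v =>
      if h : v ∈ S then z ⟨v, h⟩ else Classical.arbitrary X with hext0
    have hext0m : Measurable ext0 := by
      refine measurable_pi_lambda _ fun v => ?_
      by_cases hv : v ∈ S
      · simpa [hext0, hv] using measurable_pi_apply (⟨v, hv⟩ : S)
      · simpa [hext0, hv] using measurable_const
    have hcomp : g = (g ∘ ext0) ∘ (fun x (v : S) => x (v : V)) := by
      funext x
      have hagree : ∀ v ∈ Sf, x v = ext0 (fun v : S => x (v : V)) v := by
        intro v hv
        have hvS : v ∈ S := (hSf v).mp hv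
        simp [hext0, hvS]
      simp only [Function.comp_apply]
      rw [hgdef]
      simp only
      rw [hpFdef]
      simp only
      rw [hlocmF _ _ hagree, hlocDS _ _ hagree]
    have hmeas' :
        Measurable[MeasurableSpace.comap (fun x (v : S) => x (v : V)) MeasurableSpace.pi] g := by
      rw [hcomp]
      intro t ht
      exact ⟨(g ∘ ext0) ⁻¹' t, (hgm.comp hext0m) ht, rfl⟩
    exact ⟨g, hmeas'.stronglyMeasurable, Filter.EventuallyEq.rfl⟩
  exact ae_eq_condExp_of_forall_setIntegral_eq hm' hf1
    (fun s _ _ => hgint.integrableOn) hg_eq hgm'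


theorem measurable_select (B : Finset V) :
    Measurable (fun p : (V → X) × (V → X) => B.piecewise p.1 p.2) := by
  refine measurable_pi_lambda _ fun v => ?_
  by_cases hv : v ∈ B
  · simpa [Finset.piecewise, hv] using (by exact (measurable_pi_apply v).comp measurable_fst :
      Measurable fun c : (V → X) × (V → X) => c.1 v)
  · simpa [Finset.piecewise, hv] using (by exact (measurable_pi_apply v).comp measurable_snd :
      Measurable fun c : (V → X) × (V → X) => c.2 v)

theorem mp_select (B : Finset V) :
    MeasurePreserving (fun p : (V → X) × (V → X) => B.piecewise p.1 p.2)
      ((Measure.pi θ).prod (Measure.pi θ)) (Measure.pi θ) := by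
  refine ⟨measurable_select B, ?_⟩
  refine (Measure.pi_eq fun s hs => ?_).symm
  rw [Measure.map_apply (measurable_select B) (MeasurableSet.univ_pi hs)]
  have hpre : (fun p : (V → X) × (V → X) => B.piecewise p.1 p.2) ⁻¹' Set.univ.pi s
      = (Set.univ.pi fun v => if v ∈ B then s v else Set.univ) ×ˢ
        (Set.univ.pi fun v => if v ∈ B then Set.univ else s v) := by
    ext p
    simp only [Set.mem_preimage, Set.mem_pi, Set.mem_univ, true_implies, Set.mem_prod]
    constructor
    · intro h
      constructor <;> intro v <;> by_cases hv : v ∈ B <;>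
        simpa [Finset.piecewise, hv] using h v
    · rintro ⟨h1, h2⟩ v
      by_cases hv : v ∈ B
      · simpa [Finset.piecewise, hv] using h1 v
      · simpa [Finset.piecewise, hv] using h2 v
  rw [hpre, Measure.prod_prod, Measure.pi_pi, Measure.pi_pi, ← Finset.prod_mul_distrib]
  refine Finset.prod_congr rfl fun v _ => ?_
  by_cases hv : v ∈ B <;> simp [hv]

theorem ae_select (B : Finset V) {P : (V → X) → Prop}
    (hPm : MeasurableSet {z | P z}) (hP : ∀ᵐ z ∂(Measure.pi θ), P z) :
    ∀ᵐ p ∂((Measure.pi θ).prod (Measure.pi θ)), P (B.piecewise p.1 p.2) := by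
  have h0 : ((Measure.pi θ).prod (Measure.pi θ))
      ((fun p : (V → X) × (V → X) => B.piecewise p.1 p.2) ⁻¹' {z | P z}ᶜ) = 0 := by
    rw [(mp_select B).measure_preimage hPm.compl.nullMeasurableSet]
    exact hP
  rw [ae_iff]
  exact h0

theorem ae_select' (B : Finset V) {P : (V → X) → Prop}
    (hPm : MeasurableSet {z | P z}) (hP : ∀ᵐ z ∂(Measure.pi θ), P z) :
    ∀ᵐ p ∂((Measure.pi θ).prod (Measure.pi θ)), P (B.piecewise p.2 p.1) := by
  have hco : ∀ p : (V → X) × (V → X), B.piecewise p.2 p.1 = Bᶜ.piecewise p.1 p.2 := by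
    intro p
    funext v
    by_cases hv : v ∈ B <;> simp [Finset.piecewise, hv]
  simp_rw [hco]
  exact ae_select Bᶜ hPm hP


theorem density_eq [Nonempty X] [StandardBorelSpace X]
    {d : (V → X) → ℝ≥0∞} (hd : Measurable d) (hdpos : ∀ x, 0 < d x)
    (hd1 : ∫⁻ x, d x ∂(Measure.pi θ) = 1)
    (S : Set V) (Sf : Finset V) (hSf : ∀ v, v ∈ Sf ↔ v ∈ S)
    (u : V) (hu : u ∉ S) (Bset : Set V) (hBset : ∀ v, v ∈ Bset ↔ (v ≠ u ∧ v ∉ S))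
    {hm'pf : MeasurableSpace.comap (fun ω : V → X => (fun v : S => ω (v : V)))
        MeasurableSpace.pi ≤ MeasurableSpace.pi}
    [IsFiniteMeasure ((Measure.pi θ).withDensity d)]
    (hCI : CondIndepFun
      (MeasurableSpace.comap (fun ω : V → X => (fun v : S => ω (v : V))) MeasurableSpace.pi)
      hm'pf
      (fun ω : V → X => (fun v : ({u} : Set V) => ω (v : V)))
      (fun ω : V → X => (fun v : Bset => ω (v : V)))
      ((Measure.pi θ).withDensity d)) :
    ∀ᵐ x ∂(Measure.pi θ),
      d x * (∫⋯∫⁻_Sfᶜ, d ∂θ) x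
        = (∫⋯∫⁻_(Sfᶜ.erase u), d ∂θ) x * (∫⋯∫⁻_({u} : Finset V), d ∂θ) x := by
  have hπprob : IsProbabilityMeasure ((Measure.pi θ).withDensity d) := by
    constructor
    rw [withDensity_apply _ MeasurableSet.univ, Measure.restrict_univ]
    exact hd1
  have hprojSm : Measurable (fun x : V → X => (fun v : S => x (v : V))) :=
    measurable_pi_iff.mpr fun v : S => measurable_pi_apply (v : V)
  have hprojUm : Measurable (fun x : V → X => (fun v : ({u} : Set V) => x (v : V))) :=
    measurable_pi_iff.mpr fun v => measurable_pi_apply _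
  have hprojBm : Measurable (fun x : V → X => (fun v : Bset => x (v : V))) :=
    measurable_pi_iff.mpr fun v => measurable_pi_apply _
  haveI : SigmaFinite (((Measure.pi θ).withDensity d).trim hm'pf) := by infer_instance
  have huSf : u ∉ Sf := fun hc => hu ((hSf u).mp hc)
  have huT : u ∈ Sfᶜ := by rwa [Finset.mem_compl]
  have huR : u ∉ Sfᶜ.erase u := Finset.notMem_erase u _
  have hTR : Sfᶜ = {u} ∪ Sfᶜ.erase u := by
    rw [← Finset.insert_eq]
    exact (Finset.insert_erase huT).symm
  have hdisjUR : Disjoint ({u} : Finset V) (Sfᶜ.erase u) := by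
    simp [Finset.disjoint_singleton_left, huR]
  have hRB : ∀ v, v ∈ Sfᶜ.erase u ↔ v ∈ Bset := by
    intro v
    rw [hBset v, Finset.mem_erase, Finset.mem_compl]
    constructor
    · rintro ⟨h1, h2⟩; exact ⟨h1, fun hvS => h2 ((hSf v).mpr hvS)⟩
    · rintro ⟨h1, h2⟩; exact ⟨h1, fun hvSf => h2 ((hSf v).mp hvSf)⟩
  set DS : (V → X) → ℝ≥0∞ := ∫⋯∫⁻_Sfᶜ, d ∂θ with hDS
  set DU : (V → X) → ℝ≥0∞ := ∫⋯∫⁻_(Sfᶜ.erase u), d ∂θ with hDU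
  set DR : (V → X) → ℝ≥0∞ := ∫⋯∫⁻_({u} : Finset V), d ∂θ with hDR
  have hDSm : Measurable DS := hd.lmarginal _
  have hDUm : Measurable DU := hd.lmarginal _
  have hDRm : Measurable DR := hd.lmarginal _
  set d2 : (V → X) → ℝ≥0∞ := fun x => DU x * DR x / DS x with hd2
  have hd2m : Measurable d2 := (hDUm.mul hDRm).div hDSm
  have hDSpos : ∀ x, 0 < DS x := fun x => lmarginal_pos hd hdpos _ x
  have hlocmarg : ∀ (k : (V → X) → ℝ≥0∞), ∀ x y : V → X, (∀ v ∈ Sf, x v = y v) →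
      (∫⋯∫⁻_Sfᶜ, k ∂θ) x = (∫⋯∫⁻_Sfᶜ, k ∂θ) y := by
    intro k x y hxy
    exact lmarginal_congr _ _ fun v hv => hxy v (by simpa using hv)
  have hDS1 : ∫⁻ x, DS x ∂(Measure.pi θ) = 1 := by
    have := lintegral_mul_eq_lintegral_mul_lmarginal (θ := θ) Sf
      (g := fun _ => (1:ℝ≥0∞)) measurable_const hd (fun _ _ _ => rfl)
    simpa [hd1] using this.symm
  have hDSfin : ∀ᵐ x ∂(Measure.pi θ), DS x ≠ ∞ :=
    (ae_lt_top hDSm (by rw [hDS1]; exact ENNReal.one_ne_top)).mono fun x hx => hx.ne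
  -- the main rectangle computation
  have key : ∀ t : ∀ v : V, Set X, (∀ v, MeasurableSet (t v)) →
      ((Measure.pi θ).withDensity d) (Set.univ.pi t)
        = ((Measure.pi θ).withDensity d2) (Set.univ.pi t) := by
    intro t ht
    set FA : Set (V → X) :=
      (fun ω : V → X => (fun v : ({u} : Set V) => ω (v : V))) ⁻¹'
        (Set.univ.pi fun v : ({u} : Set V) => t (v : V)) with hFAdef
    set FB : Set (V → X) :=
      (fun ω : V → X => (fun v : Bset => ω (v : V))) ⁻¹'
        (Set.univ.pi fun v : Bset => t (v : V)) with hFBdef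
    set FE : Set (V → X) :=
      (fun ω : V → X => (fun v : S => ω (v : V))) ⁻¹'
        (Set.univ.pi fun v : S => t (v : V)) with hFEdef
    have hFAmem : ∀ x : V → X, x ∈ FA ↔ x u ∈ t u := by
      intro x
      simp only [hFAdef, Set.mem_preimage, Set.mem_pi, Set.mem_univ, true_implies]
      constructor
      · intro h; exact h ⟨u, rfl⟩
      · rintro h ⟨v, hv⟩
        rcases hv with rfl
        exact h
    have hFBmem : ∀ x : V → X, x ∈ FB ↔ ∀ v ∈ Bset, x v ∈ t v := by
      intro x
      simp only [hFBdef, Set.mem_preimage, Set.mem_pi, Set.mem_univ, true_implies]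
      exact ⟨fun h v hv => h ⟨v, hv⟩, fun h v => h v v.2⟩
    have hFEmem : ∀ x : V → X, x ∈ FE ↔ ∀ v ∈ S, x v ∈ t v := by
      intro x
      simp only [hFEdef, Set.mem_preimage, Set.mem_pi, Set.mem_univ, true_implies]
      exact ⟨fun h v hv => h ⟨v, hv⟩, fun h v => h v v.2⟩
    have hFAm : MeasurableSet FA := hprojUm (MeasurableSet.univ_pi fun v => ht (v : V))
    have hFBm : MeasurableSet FB := hprojBm (MeasurableSet.univ_pi fun v => ht (v : V))
    have hFEm : MeasurableSet FE := hprojSm (MeasurableSet.univ_pi fun v => ht (v : V))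
    have hFEm' : MeasurableSet[MeasurableSpace.comap
        (fun ω : V → X => (fun v : S => ω (v : V))) MeasurableSpace.pi] FE :=
      ⟨_, MeasurableSet.univ_pi fun v => ht (v : V), rfl⟩
    have hsplit : Set.univ.pi t = FA ∩ FB ∩ FE := by
      ext x
      simp only [Set.mem_pi, Set.mem_univ, true_implies, Set.mem_inter_iff,
        hFAmem, hFBmem, hFEmem]
      constructor
      · intro h; exact ⟨⟨h u, fun v _ => h v⟩, fun v _ => h v⟩
      · rintro ⟨⟨h1, h2⟩, h3⟩ v
        by_cases hvu : v = u
        · exact hvu ▸ h1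
        · by_cases hvS : v ∈ S
          · exact h3 v hvS
          · exact h2 v ((hBset v).mpr ⟨hvu, hvS⟩)
    -- marginal densities
    set mA : (V → X) → ℝ≥0∞ :=
      ∫⋯∫⁻_Sfᶜ, (fun y => FA.indicator (fun _ => (1:ℝ≥0∞)) y * d y) ∂θ with hmA
    set mB : (V → X) → ℝ≥0∞ :=
      ∫⋯∫⁻_Sfᶜ, (fun y => FB.indicator (fun _ => (1:ℝ≥0∞)) y * d y) ∂θ with hmB
    have hindAm : Measurable (FA.indicator (fun _ : V → X => (1:ℝ≥0∞))) :=
      measurable_const.indicator hFAm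
    have hindBm : Measurable (FB.indicator (fun _ : V → X => (1:ℝ≥0∞))) :=
      measurable_const.indicator hFBm
    have hindEm : Measurable (FE.indicator (fun _ : V → X => (1:ℝ≥0∞))) :=
      measurable_const.indicator hFEm
    have hmAm : Measurable mA := (hindAm.mul hd).lmarginal _
    have hmBm : Measurable mB := (hindBm.mul hd).lmarginal _
    have hmAle : ∀ x, mA x ≤ DS x := by
      intro x
      refine lmarginal_mono (fun y => ?_) x
      by_cases hy : y ∈ FA <;> simp [hy]
    have hmBle : ∀ x, mB x ≤ DS x := by
      intro x
      refine lmarginal_mono (fun y => ?_) x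
      by_cases hy : y ∈ FB <;> simp [hy]
    -- conditional expectation identities
    have hCEA := condexp_indicator_formula (θ := θ) hd hd1 S Sf hSf hFAm
    have hCEB := condexp_indicator_formula (θ := θ) hd hd1 S Sf hSf hFBm
    have hcond := (condIndepFun_iff_condExp_inter_preimage_eq_mul
      (hm' := hm'pf) hprojUm hprojBm).mp hCI _ _
      (MeasurableSet.univ_pi fun v => ht (v : V)) (MeasurableSet.univ_pi fun v => ht (v : V))
    -- combined conditional expectation identity
    have hcomb : ((Measure.pi θ).withDensity d)[(FA ∩ FB).indicator (fun _ => (1:ℝ)) |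
          MeasurableSpace.comap (fun ω : V → X => (fun v : S => ω (v : V)))
            MeasurableSpace.pi]
        =ᵐ[(Measure.pi θ).withDensity d]
          fun x => (mA x / DS x).toReal * (mB x / DS x).toReal := by
      refine hcond.trans ?_
      filter_upwards [hCEA, hCEB] with x h2 h3
      show _ * _ = (mA x / DS x).toReal * (mB x / DS x).toReal
      rw [← h2, ← h3]
    -- Bochner chain for the μ side
    have hb1 : (((Measure.pi θ).withDensity d) (Set.univ.pi t)).toReal
        = ∫ x in FE, (FA ∩ FB).indicator (fun _ => (1:ℝ)) x ∂((Measure.pi θ).withDensity d) := by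
      rw [setIntegral_indicator (hFAm.inter hFBm), setIntegral_const, smul_eq_mul, mul_one,
        hsplit, Set.inter_comm, measureReal_def]
    have hb2 : ∫ x in FE, (FA ∩ FB).indicator (fun _ => (1:ℝ)) x ∂((Measure.pi θ).withDensity d)
        = ∫ x in FE, (((Measure.pi θ).withDensity d)[(FA ∩ FB).indicator (fun _ => (1:ℝ)) |
            MeasurableSpace.comap (fun ω : V → X => (fun v : S => ω (v : V)))
              MeasurableSpace.pi]) x ∂((Measure.pi θ).withDensity d) :=
      (setIntegral_condExp hm'pf ((integrable_const (1:ℝ)).indicator (hFAm.inter hFBm))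
        hFEm').symm
    have hb3 : ∫ x in FE, (((Measure.pi θ).withDensity d)[(FA ∩ FB).indicator (fun _ => (1:ℝ)) |
            MeasurableSpace.comap (fun ω : V → X => (fun v : S => ω (v : V)))
              MeasurableSpace.pi]) x ∂((Measure.pi θ).withDensity d)
        = ∫ x in FE, ((mA x / DS x).toReal * (mB x / DS x).toReal)
            ∂((Measure.pi θ).withDensity d) :=
      integral_congr_ae (ae_restrict_of_ae hcomb)
    have hprodle : ∀ x, (mA x / DS x) * (mB x / DS x) ≤ 1 := by
      intro x
      have h1 : mA x / DS x ≤ 1 := ENNReal.div_le_of_le_mul (by rw [one_mul]; exact hmAle x)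
      have h2 : mB x / DS x ≤ 1 := ENNReal.div_le_of_le_mul (by rw [one_mul]; exact hmBle x)
      calc (mA x / DS x) * (mB x / DS x) ≤ 1 * 1 := mul_le_mul' h1 h2
        _ = 1 := one_mul 1
    have hb4 : ∫ x in FE, ((mA x / DS x).toReal * (mB x / DS x).toReal)
          ∂((Measure.pi θ).withDensity d)
        = (∫⁻ x in FE, (mA x / DS x) * (mB x / DS x) ∂((Measure.pi θ).withDensity d)).toReal := by
      have h : ∀ x, (mA x / DS x).toReal * (mB x / DS x).toReal
          = ((mA x / DS x) * (mB x / DS x)).toReal := fun x => (ENNReal.toReal_mul).symm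
      simp_rw [h]
      refine integral_toReal (((hmAm.div hDSm).mul (hmBm.div hDSm)).aemeasurable.restrict) ?_
      exact Filter.Eventually.of_forall fun x =>
        lt_of_le_of_lt (hprodle x) ENNReal.one_lt_top
    have he1 : ∫⁻ x in FE, (mA x / DS x) * (mB x / DS x) ∂((Measure.pi θ).withDensity d)
        = ∫⁻ x, (FE.indicator (fun _ => (1:ℝ≥0∞)) x * ((mA x / DS x) * (mB x / DS x)))
            * d x ∂(Measure.pi θ) := by
      rw [restrict_withDensity hFEm,
        lintegral_withDensity_eq_lintegral_mul _ hd (by exact (hmAm.div hDSm).mul (hmBm.div hDSm) :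
          Measurable fun x => (mA x / DS x) * (mB x / DS x)),
        ← lintegral_indicator hFEm]
      congr 1
      funext x
      by_cases hx : x ∈ FE <;> simp [hx, mul_comm]
    have hlocmA : ∀ x y : V → X, (∀ v ∈ Sf, x v = y v) → mA x = mA y :=
      fun x y hxy => hlocmarg _ x y hxy
    have hlocmB : ∀ x y : V → X, (∀ v ∈ Sf, x v = y v) → mB x = mB y :=
      fun x y hxy => hlocmarg _ x y hxy
    have hlocDS : ∀ x y : V → X, (∀ v ∈ Sf, x v = y v) → DS x = DS y :=
      fun x y hxy => hlocmarg _ x y hxy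
    have hlocFE : ∀ x y : V → X, (∀ v ∈ Sf, x v = y v) →
        FE.indicator (fun _ => (1:ℝ≥0∞)) x = FE.indicator (fun _ => (1:ℝ≥0∞)) y := by
      intro x y hxy
      have hxyS : ∀ v ∈ S, x v = y v := fun v hv => hxy v ((hSf v).mpr hv)
      by_cases hx : x ∈ FE
      · have hy : y ∈ FE := by
          rw [hFEmem] at hx ⊢
          intro v hv; rw [← hxyS v hv]; exact hx v hv
        simp [hx, hy]
      · have hy : y ∉ FE := by
          rw [hFEmem] at hx ⊢
          intro hc
          exact hx fun v hv => (hxyS v hv) ▸ hc v hv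
        simp [hx, hy]
    have hq : Measurable fun x => FE.indicator (fun _ => (1:ℝ≥0∞)) x
        * ((mA x / DS x) * (mB x / DS x)) :=
      hindEm.mul ((hmAm.div hDSm).mul (hmBm.div hDSm))
    have he2 : ∫⁻ x, (FE.indicator (fun _ => (1:ℝ≥0∞)) x * ((mA x / DS x) * (mB x / DS x)))
          * d x ∂(Measure.pi θ)
        = ∫⁻ x, (FE.indicator (fun _ => (1:ℝ≥0∞)) x * ((mA x / DS x) * (mB x / DS x)))
          * DS x ∂(Measure.pi θ) := by
      have h := lintegral_mul_eq_lintegral_mul_lmarginal (θ := θ) Sf hq hd ?_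
      · exact h
      · intro x y hxy
        rw [hlocFE x y hxy, hlocmA x y hxy, hlocmB x y hxy, hlocDS x y hxy]
    -- locality of indicators in single coordinates
    have hindAloc : ∀ x y : V → X, x u = y u →
        FA.indicator (fun _ => (1:ℝ≥0∞)) x = FA.indicator (fun _ => (1:ℝ≥0∞)) y := by
      intro x y hxy
      by_cases hx : x ∈ FA
      · have hy : y ∈ FA := by rw [hFAmem] at hx ⊢; rwa [← hxy]
        simp [hx, hy]
      · have hy : y ∉ FA := by rw [hFAmem] at hx ⊢; rwa [← hxy]
        simp [hx, hy]
    have hindBloc : ∀ x y : V → X, (∀ v ∈ Bset, x v = y v) →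
        FB.indicator (fun _ => (1:ℝ≥0∞)) x = FB.indicator (fun _ => (1:ℝ≥0∞)) y := by
      intro x y hxy
      by_cases hx : x ∈ FB
      · have hy : y ∈ FB := by
          rw [hFBmem] at hx ⊢
          intro v hv; rw [← hxy v hv]; exact hx v hv
        simp [hx, hy]
      · have hy : y ∉ FB := by
          rw [hFBmem] at hx ⊢
          intro hc
          exact hx fun v hv => (hxy v hv) ▸ hc v hv
        simp [hx, hy]
    -- identify mA
    have hMA : mA = ∫⋯∫⁻_({u} : Finset V),
        (fun x => FA.indicator (fun _ => (1:ℝ≥0∞)) x * DU x) ∂θ := by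
      rw [hmA, hDU]
      conv_lhs => rw [hTR]
      rw [lmarginal_union θ (fun y => FA.indicator (fun _ => (1:ℝ≥0∞)) y * d y) (hindAm.mul hd) hdisjUR,
        lmarginal_mul_left (θ := θ) (Sfᶜ.erase u) hd
          (fun x y hxy => hindAloc x y (hxy u huR))]
    -- identify mB
    have hMB : mB = ∫⋯∫⁻_(Sfᶜ.erase u),
        (fun x => FB.indicator (fun _ => (1:ℝ≥0∞)) x * DR x) ∂θ := by
      rw [hmB, hDR]
      conv_lhs => rw [hTR]
      have hloc2 : ∀ x y : V → X, (∀ v, v ∉ ({u} : Finset V) → x v = y v) →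
          FB.indicator (fun _ => (1:ℝ≥0∞)) x = FB.indicator (fun _ => (1:ℝ≥0∞)) y := by
        intro x y hxy
        refine hindBloc x y fun v hv => ?_
        have hvu : v ≠ u := ((hRB v).mpr hv |> Finset.mem_erase.mp).1
        exact hxy v (by simp [hvu])
      rw [lmarginal_union' θ (fun y => FB.indicator (fun _ => (1:ℝ≥0∞)) y * d y) (hindBm.mul hd) hdisjUR,
        lmarginal_mul_left (θ := θ) ({u} : Finset V) hd hloc2]
    -- mB does not depend on the coordinate at u
    have hmBuind : ∀ x y : V → X, (∀ v, v ≠ u → x v = y v) → mB x = mB y := by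
      intro x y hxy
      rw [hMB, lmarginal, lmarginal]
      refine lintegral_congr fun z => ?_
      have hagree : ∀ v, v ≠ u →
          updateFinset x (Sfᶜ.erase u) z v = updateFinset y (Sfᶜ.erase u) z v := by
        intro v hv
        by_cases hvR : v ∈ Sfᶜ.erase u
        · simp [updateFinset, hvR]
        · simp [updateFinset, hvR, hxy v hv]
      have hagreeR : ∀ v ∈ Bset,
          updateFinset x (Sfᶜ.erase u) z v = updateFinset y (Sfᶜ.erase u) z v := by
        intro v hv
        exact hagree v ((Finset.mem_erase.mp ((hRB v).mpr hv)).1)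
      rw [hindBloc _ _ hagreeR]
      congr 1
      exact lmarginal_congr _ _ fun v hv => hagree v (by simpa using hv)
    -- DU does not depend on coordinates in R; indicator of FA neither
    have hgAloc : ∀ x y : V → X, (∀ v, v ∉ Sfᶜ.erase u → x v = y v) →
        FA.indicator (fun _ => (1:ℝ≥0∞)) x * DU x
          = FA.indicator (fun _ => (1:ℝ≥0∞)) y * DU y := by
      intro x y hxy
      rw [hindAloc x y (hxy u huR), hDU]
      congr 1
      exact lmarginal_congr _ _ fun v hv => hxy v hv
    -- compute the T-marginal appearing in the ν side
    have hM : (∫⋯∫⁻_Sfᶜ, (fun x => FA.indicator (fun _ => (1:ℝ≥0∞)) x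
          * (FB.indicator (fun _ => (1:ℝ≥0∞)) x * (DU x * DR x))) ∂θ)
        = fun x => mA x * mB x := by
      have hre : (fun x => FA.indicator (fun _ => (1:ℝ≥0∞)) x
            * (FB.indicator (fun _ => (1:ℝ≥0∞)) x * (DU x * DR x)))
          = fun x => (FA.indicator (fun _ => (1:ℝ≥0∞)) x * DU x)
            * (FB.indicator (fun _ => (1:ℝ≥0∞)) x * DR x) := by
        funext x; ring
      rw [hre, hTR, lmarginal_union θ (fun x => (FA.indicator (fun _ => (1:ℝ≥0∞)) x * DU x)
            * (FB.indicator (fun _ => (1:ℝ≥0∞)) x * DR x)) (((hindAm.mul hDUm)).mul ((hindBm.mul hDRm)))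
        hdisjUR]
      have hinner : (∫⋯∫⁻_(Sfᶜ.erase u), (fun x => (FA.indicator (fun _ => (1:ℝ≥0∞)) x * DU x)
            * (FB.indicator (fun _ => (1:ℝ≥0∞)) x * DR x)) ∂θ)
          = fun x => (FA.indicator (fun _ => (1:ℝ≥0∞)) x * DU x) * mB x := by
        rw [lmarginal_mul_left _ (by exact hindBm.mul hDRm :
          Measurable fun x => FB.indicator (fun _ => (1:ℝ≥0∞)) x * DR x) hgAloc]
        funext x
        rw [hMB]
      rw [hinner]
      have hre2 : (fun x => FA.indicator (fun _ => (1:ℝ≥0∞)) x * DU x * mB x)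
          = fun x => mB x * (FA.indicator (fun _ => (1:ℝ≥0∞)) x * DU x) := by
        funext x; ring
      rw [hre2, lmarginal_mul_left _ (by exact hindAm.mul hDUm :
          Measurable fun x => FA.indicator (fun _ => (1:ℝ≥0∞)) x * DU x) ?hloc]
      case hloc =>
        intro x y hxy
        exact hmBuind x y fun v hv => hxy v (by simp [hv])
      funext x
      rw [hMA]
      ring
    -- ν side
    have hν1 : ((Measure.pi θ).withDensity d2) (Set.univ.pi t)
        = ∫⁻ x, (FE.indicator (fun _ => (1:ℝ≥0∞)) x * (DS x)⁻¹)
            * (FA.indicator (fun _ => (1:ℝ≥0∞)) x * (FB.indicator (fun _ => (1:ℝ≥0∞)) x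
              * (DU x * DR x))) ∂(Measure.pi θ) := by
      rw [withDensity_apply _ (MeasurableSet.univ_pi fun v => ht v),
        ← lintegral_indicator (MeasurableSet.univ_pi fun v => ht v)]
      congr 1
      funext x
      rw [hsplit]
      by_cases hA : x ∈ FA <;> by_cases hB : x ∈ FB <;> by_cases hE : x ∈ FE <;>
        simp [Set.indicator, hA, hB, hE, Set.mem_inter_iff, hd2,
          ENNReal.div_eq_inv_mul, mul_comm, mul_left_comm]
    have hgEm : Measurable fun x => FE.indicator (fun _ => (1:ℝ≥0∞)) x * (DS x)⁻¹ :=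
      hindEm.mul hDSm.inv
    have hgEloc : ∀ x y : V → X, (∀ v ∈ Sf, x v = y v) →
        FE.indicator (fun _ => (1:ℝ≥0∞)) x * (DS x)⁻¹
          = FE.indicator (fun _ => (1:ℝ≥0∞)) y * (DS y)⁻¹ := by
      intro x y hxy
      rw [hlocFE x y hxy, hlocDS x y hxy]
    have hν2 : ((Measure.pi θ).withDensity d2) (Set.univ.pi t)
        = ∫⁻ x, (FE.indicator (fun _ => (1:ℝ≥0∞)) x * (DS x)⁻¹)
            * (mA x * mB x) ∂(Measure.pi θ) := by
      rw [hν1, lintegral_mul_eq_lintegral_mul_lmarginal (θ := θ) Sf hgEm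
        (by exact (hindAm.mul (hindBm.mul (hDUm.mul hDRm))) :
          Measurable fun x => FA.indicator (fun _ => (1:ℝ≥0∞)) x
            * (FB.indicator (fun _ => (1:ℝ≥0∞)) x * (DU x * DR x))) hgEloc, hM]
    -- pointwise identity connecting the two sides
    have hfinal : ∫⁻ x, (FE.indicator (fun _ => (1:ℝ≥0∞)) x
          * ((mA x / DS x) * (mB x / DS x))) * DS x ∂(Measure.pi θ)
        = ∫⁻ x, (FE.indicator (fun _ => (1:ℝ≥0∞)) x * (DS x)⁻¹)
            * (mA x * mB x) ∂(Measure.pi θ) := by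
      refine lintegral_congr_ae (hDSfin.mono fun x hx => ?_)
      have hkey : (mA x / DS x) * (mB x / DS x) * DS x = (DS x)⁻¹ * (mA x * mB x) := by
        rw [div_eq_mul_inv, div_eq_mul_inv]
        calc mA x * (DS x)⁻¹ * (mB x * (DS x)⁻¹) * DS x
            = (mA x * mB x) * (DS x)⁻¹ * ((DS x)⁻¹ * DS x) := by ring
          _ = (DS x)⁻¹ * (mA x * mB x) := by
              rw [ENNReal.inv_mul_cancel (hDSpos x).ne' hx, mul_one]; ring
      calc (FE.indicator (fun _ => (1:ℝ≥0∞)) x * ((mA x / DS x) * (mB x / DS x))) * DS x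
          = FE.indicator (fun _ => (1:ℝ≥0∞)) x * ((mA x / DS x) * (mB x / DS x) * DS x) := by
            ring
        _ = FE.indicator (fun _ => (1:ℝ≥0∞)) x * ((DS x)⁻¹ * (mA x * mB x)) := by rw [hkey]
        _ = (FE.indicator (fun _ => (1:ℝ≥0∞)) x * (DS x)⁻¹) * (mA x * mB x) := by ring
    -- bound: common value is at most 1
    have hbound : ∫⁻ x, (FE.indicator (fun _ => (1:ℝ≥0∞)) x
          * ((mA x / DS x) * (mB x / DS x))) * DS x ∂(Measure.pi θ) ≤ 1 := by
      refine le_trans (lintegral_mono fun x => ?_) (le_of_eq hDS1)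
      have hE1 : FE.indicator (fun _ => (1:ℝ≥0∞)) x ≤ 1 := by
        by_cases hx : x ∈ FE <;> simp [hx]
      calc (FE.indicator (fun _ => (1:ℝ≥0∞)) x * ((mA x / DS x) * (mB x / DS x))) * DS x
          ≤ (1 * 1) * DS x := mul_le_mul_left (mul_le_mul' hE1 (hprodle x)) _
        _ = DS x := by rw [one_mul, one_mul]
    -- put everything together
    have htoReal : (((Measure.pi θ).withDensity d) (Set.univ.pi t)).toReal
        = ((∫⁻ x, (FE.indicator (fun _ => (1:ℝ≥0∞)) x
            * ((mA x / DS x) * (mB x / DS x))) * DS x ∂(Measure.pi θ))).toReal := by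
      rw [hb1, hb2, hb3, hb4, he1, he2]
    have hμfin : ((Measure.pi θ).withDensity d) (Set.univ.pi t) ≠ ∞ := measure_ne_top _ _
    have hIfin : ∫⁻ x, (FE.indicator (fun _ => (1:ℝ≥0∞)) x
        * ((mA x / DS x) * (mB x / DS x))) * DS x ∂(Measure.pi θ) ≠ ∞ :=
      ne_top_of_le_ne_top ENNReal.one_ne_top hbound
    have hveq : ((Measure.pi θ).withDensity d) (Set.univ.pi t)
        = ∫⁻ x, (FE.indicator (fun _ => (1:ℝ≥0∞)) x
          * ((mA x / DS x) * (mB x / DS x))) * DS x ∂(Measure.pi θ) :=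
      (ENNReal.toReal_eq_toReal_iff' hμfin hIfin).mp htoReal
    rw [hveq, hν2, hfinal]
  -- measure extensionality
  haveI hνfin : IsFiniteMeasure ((Measure.pi θ).withDensity d2) := by
    constructor
    have h := key (fun _ => Set.univ) (fun _ => MeasurableSet.univ)
    rw [Set.pi_univ] at h
    rw [← h]
    exact measure_lt_top _ _
  have hμν : (Measure.pi θ).withDensity d = (Measure.pi θ).withDensity d2 := by
    refine ext_of_generate_finite _ generateFrom_pi.symm isPiSystem_pi ?_ ?_
    · rintro s ⟨t, ht, rfl⟩
      exact key t fun v => ht v (Set.mem_univ v)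
    · have h := key (fun _ => Set.univ) fun _ => MeasurableSet.univ
      rwa [Set.pi_univ] at h
  have hdd2 : d =ᵐ[Measure.pi θ] d2 := by
    rw [← withDensity_eq_iff_of_sigmaFinite hd.aemeasurable hd2m.aemeasurable]
    exact hμν
  filter_upwards [hdd2, hDSfin] with x h1 h2
  rw [show d x = d2 x from h1, hd2]
  simp only
  rw [ENNReal.div_mul_cancel ((lmarginal_pos hd hdpos _ x).ne') h2]

-- graph lemmas and Möbius algebra
theorem not_mem_graphBdry2_self (G : SimpleGraph V) (u : V) : u ∉ graphBdry2 G {u} := by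
  rintro (⟨h1, -⟩ | ⟨h1, -⟩)
  · exact h1 rfl
  · exact h1 (Or.inl rfl)

theorem reachable_of_mem_graphBdry2 (G : SimpleGraph V) (u w : V)
    (hw : w ∈ graphBdry2 G {u}) : G.Reachable w u ∧ G.dist w u ≤ 2 := by
  rcases hw with ⟨h1, v, hv, hadj⟩ | ⟨h1, v, hv, hadj⟩
  · rcases hv with rfl
    refine ⟨hadj.reachable, ?_⟩
    refine le_trans (SimpleGraph.dist_le (SimpleGraph.Walk.cons hadj SimpleGraph.Walk.nil)) ?_
    simp
  · rcases hv with hv | ⟨-, v', hv', hadj'⟩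
    · rcases hv with rfl
      refine ⟨hadj.reachable, ?_⟩
      refine le_trans (SimpleGraph.dist_le (SimpleGraph.Walk.cons hadj SimpleGraph.Walk.nil)) ?_
      simp
    · rcases hv' with rfl
      refine ⟨⟨SimpleGraph.Walk.cons hadj (SimpleGraph.Walk.cons hadj' SimpleGraph.Walk.nil)⟩, ?_⟩
      refine le_trans (SimpleGraph.dist_le
        (SimpleGraph.Walk.cons hadj (SimpleGraph.Walk.cons hadj' SimpleGraph.Walk.nil))) ?_
      simp

theorem mobius_inversion (U : Finset V) : ∀ g : Finset V → ℝ,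
    ∑ A ∈ U.powerset, ∑ B ∈ A.powerset, (-1:ℝ)^(A.card + B.card) * g B = g U := by
  induction U using Finset.induction_on with
  | empty =>
    intro g
    simp
  | @insert u U hu ih =>
    intro g
    rw [Finset.sum_powerset_insert hu]
    have hexp : ∀ A ∈ U.powerset,
        ∑ B ∈ (insert u A).powerset, (-1:ℝ)^((insert u A).card + B.card) * g B
        = -(∑ B ∈ A.powerset, (-1:ℝ)^(A.card + B.card) * g B)
          + ∑ B ∈ A.powerset, (-1:ℝ)^(A.card + B.card) * g (insert u B) := by
      intro A hA
      have huA : u ∉ A := fun hc => hu (Finset.mem_powerset.mp hA hc)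
      rw [Finset.sum_powerset_insert huA, Finset.card_insert_of_notMem huA,
        ← Finset.sum_neg_distrib]
      congr 1
      · refine Finset.sum_congr rfl fun B hB => ?_
        rw [show A.card + 1 + B.card = (A.card + B.card) + 1 by ring, pow_succ]
        ring
      · refine Finset.sum_congr rfl fun B hB => ?_
        have huB : u ∉ B := fun hc => huA (Finset.mem_powerset.mp hB hc)
        rw [Finset.card_insert_of_notMem huB,
          show A.card + 1 + (B.card + 1) = (A.card + B.card) + 2 by ring, pow_add]
        norm_num
    rw [Finset.sum_congr rfl hexp, Finset.sum_add_distrib, Finset.sum_neg_distrib,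
      ih g, ih (fun B => g (insert u B))]
    ring

theorem sum_zero_of_pair (g : Finset V → ℝ) (A : Finset V) (u w : V)
    (hu : u ∈ A) (hw : w ∈ A) (huw : u ≠ w)
    (hcross : ∀ B : Finset V, u ∉ B → w ∉ B →
      g B + g (insert u (insert w B)) = g (insert u B) + g (insert w B)) :
    ∑ B ∈ A.powerset, (-1:ℝ)^(A.card + B.card) * g B = 0 := by
  have hwA : w ∈ A.erase u := Finset.mem_erase.mpr ⟨huw.symm, hw⟩
  set A' : Finset V := (A.erase u).erase w with hA'
  have hA : A = insert u (insert w A') := by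
    rw [hA', Finset.insert_erase hwA, Finset.insert_erase hu]
  have hwA' : w ∉ A' := Finset.notMem_erase _ _
  have huA' : u ∉ insert w A' := by
    simp only [Finset.mem_insert]
    rintro (rfl | hc)
    · exact huw rfl
    · exact Finset.notMem_erase u _ (Finset.mem_of_mem_erase hc)
  have hNA : (insert u (insert w A')).card = A'.card + 2 := by
    rw [Finset.card_insert_of_notMem huA', Finset.card_insert_of_notMem hwA']
  rw [hA, Finset.sum_powerset_insert huA', Finset.sum_powerset_insert hwA',
    Finset.sum_powerset_insert hwA', hNA, ← Finset.sum_add_distrib, ← Finset.sum_add_distrib,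
    ← Finset.sum_add_distrib]
  refine Finset.sum_eq_zero fun B hB => ?_
  have hBA' : B ⊆ A' := Finset.mem_powerset.mp hB
  have hwB : w ∉ B := fun hc => hwA' (hBA' hc)
  have huB : u ∉ B := fun hc => huA' (Finset.mem_insert_of_mem (hBA' hc))
  have huwB : u ∉ insert w B := by
    simp only [Finset.mem_insert]
    rintro (rfl | hc)
    · exact huw rfl
    · exact huB hc
  rw [Finset.card_insert_of_notMem hwB, Finset.card_insert_of_notMem huB,
    Finset.card_insert_of_notMem huwB, Finset.card_insert_of_notMem hwB]
  have e1 : (-1:ℝ)^(A'.card + 2 + (B.card + 1)) = -(-1:ℝ)^(A'.card + 2 + B.card) := by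
    rw [show A'.card + 2 + (B.card + 1) = (A'.card + 2 + B.card) + 1 by ring, pow_succ]
    ring
  have e2 : (-1:ℝ)^(A'.card + 2 + (B.card + 1 + 1)) = (-1:ℝ)^(A'.card + 2 + B.card) := by
    rw [show A'.card + 2 + (B.card + 1 + 1) = (A'.card + 2 + B.card) + 2 by ring, pow_add]
    norm_num
  rw [e1, e2]
  linear_combination ((-1:ℝ)^(A'.card + 2 + B.card)) * (hcross B huB hwB)

theorem cross_ae {d : (V → X) → ℝ≥0∞} (hd : Measurable d) (hdpos : ∀ x, 0 < d x)
    (Sf : Finset V) (u w : V) (hu : u ∉ Sf) (hw : w ∉ Sf) (hwu : w ≠ u)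
    (hDeq : ∀ᵐ x ∂(Measure.pi θ), d x * (∫⋯∫⁻_Sfᶜ, d ∂θ) x
        = (∫⋯∫⁻_(Sfᶜ.erase u), d ∂θ) x * (∫⋯∫⁻_({u} : Finset V), d ∂θ) x)
    (hDSfin : ∀ᵐ x ∂(Measure.pi θ), (∫⋯∫⁻_Sfᶜ, d ∂θ) x ≠ ∞)
    (B : Finset V) (huB : u ∉ B) (hwB : w ∉ B) :
    ∀ᵐ p ∂((Measure.pi θ).prod (Measure.pi θ)),
      d (B.piecewise p.2 p.1) * d ((insert u (insert w B)).piecewise p.2 p.1)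
        = d ((insert u B).piecewise p.2 p.1) * d ((insert w B).piecewise p.2 p.1) := by
  have hDSm : Measurable (∫⋯∫⁻_Sfᶜ, d ∂θ) := hd.lmarginal _
  have hDUm : Measurable (∫⋯∫⁻_(Sfᶜ.erase u), d ∂θ) := hd.lmarginal _
  have hDRm : Measurable (∫⋯∫⁻_({u} : Finset V), d ∂θ) := hd.lmarginal _
  have hmeq : MeasurableSet {z : V → X | d z * (∫⋯∫⁻_Sfᶜ, d ∂θ) z
      = (∫⋯∫⁻_(Sfᶜ.erase u), d ∂θ) z * (∫⋯∫⁻_({u} : Finset V), d ∂θ) z} := by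
    have h1 : Measurable fun z => d z * (∫⋯∫⁻_Sfᶜ, d ∂θ) z := hd.mul hDSm
    have h2 : Measurable fun z => (∫⋯∫⁻_(Sfᶜ.erase u), d ∂θ) z
        * (∫⋯∫⁻_({u} : Finset V), d ∂θ) z := hDUm.mul hDRm
    have : {z : V → X | d z * (∫⋯∫⁻_Sfᶜ, d ∂θ) z
        = (∫⋯∫⁻_(Sfᶜ.erase u), d ∂θ) z * (∫⋯∫⁻_({u} : Finset V), d ∂θ) z}
        = {z | d z * (∫⋯∫⁻_Sfᶜ, d ∂θ) z
            ≤ (∫⋯∫⁻_(Sfᶜ.erase u), d ∂θ) z * (∫⋯∫⁻_({u} : Finset V), d ∂θ) z}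
          ∩ {z | (∫⋯∫⁻_(Sfᶜ.erase u), d ∂θ) z * (∫⋯∫⁻_({u} : Finset V), d ∂θ) z
            ≤ d z * (∫⋯∫⁻_Sfᶜ, d ∂θ) z} := by
      ext z
      simp only [Set.mem_setOf_eq, Set.mem_inter_iff, le_antisymm_iff]
    rw [this]
    exact (measurableSet_le h1 h2).inter (measurableSet_le h2 h1)
  have hmfin : MeasurableSet {z : V → X | (∫⋯∫⁻_Sfᶜ, d ∂θ) z ≠ ∞} :=
    (hDSm (measurableSet_singleton ∞)).compl
  have h0 := ae_select' (θ := θ) B hmeq hDeq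
  have h1 := ae_select' (θ := θ) (insert u B) hmeq hDeq
  have h2 := ae_select' (θ := θ) (insert w B) hmeq hDeq
  have h3 := ae_select' (θ := θ) (insert u (insert w B)) hmeq hDeq
  have hfin := ae_select' (θ := θ) B hmfin hDSfin
  filter_upwards [h0, h1, h2, h3, hfin] with p e0 e1 e2 e3 efin
  set z0 : V → X := B.piecewise p.2 p.1 with hz0
  set z1 : V → X := (insert u B).piecewise p.2 p.1 with hz1
  set z2 : V → X := (insert w B).piecewise p.2 p.1 with hz2
  set z3 : V → X := (insert u (insert w B)).piecewise p.2 p.1 with hz3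
  -- coordinatewise agreements
  have hag10 : ∀ v, v ≠ u → z1 v = z0 v := by
    intro v hv
    simp [hz0, hz1, Finset.piecewise, Finset.mem_insert, hv]
  have hag20 : ∀ v, v ≠ w → z2 v = z0 v := by
    intro v hv
    simp [hz0, hz2, Finset.piecewise, Finset.mem_insert, hv]
  have hag31 : ∀ v, v ≠ w → z3 v = z1 v := by
    intro v hv
    simp [hz1, hz3, Finset.piecewise, Finset.mem_insert, hv]
  have hag32 : ∀ v, v ≠ u → z3 v = z2 v := by
    intro v hv
    simp [hz2, hz3, Finset.piecewise, Finset.mem_insert, hv]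
  have hwR : w ∈ Sfᶜ.erase u := Finset.mem_erase.mpr ⟨hwu, Finset.mem_compl.mpr hw⟩
  -- marginals agree
  have hDS10 : (∫⋯∫⁻_Sfᶜ, d ∂θ) z1 = (∫⋯∫⁻_Sfᶜ, d ∂θ) z0 :=
    lmarginal_congr _ _ fun v hv => hag10 v (fun hc => hv (hc ▸ Finset.mem_compl.mpr hu))
  have hDS20 : (∫⋯∫⁻_Sfᶜ, d ∂θ) z2 = (∫⋯∫⁻_Sfᶜ, d ∂θ) z0 :=
    lmarginal_congr _ _ fun v hv => hag20 v (fun hc => hv (hc ▸ Finset.mem_compl.mpr hw))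
  have hDS31 : (∫⋯∫⁻_Sfᶜ, d ∂θ) z3 = (∫⋯∫⁻_Sfᶜ, d ∂θ) z1 :=
    lmarginal_congr _ _ fun v hv => hag31 v (fun hc => hv (hc ▸ Finset.mem_compl.mpr hw))
  have hDU20 : (∫⋯∫⁻_(Sfᶜ.erase u), d ∂θ) z2 = (∫⋯∫⁻_(Sfᶜ.erase u), d ∂θ) z0 :=
    lmarginal_congr _ _ fun v hv => hag20 v (fun hc => hv (hc ▸ hwR))
  have hDU31 : (∫⋯∫⁻_(Sfᶜ.erase u), d ∂θ) z3 = (∫⋯∫⁻_(Sfᶜ.erase u), d ∂θ) z1 :=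
    lmarginal_congr _ _ fun v hv => hag31 v (fun hc => hv (hc ▸ hwR))
  have hDR10 : (∫⋯∫⁻_({u} : Finset V), d ∂θ) z1 = (∫⋯∫⁻_({u} : Finset V), d ∂θ) z0 :=
    lmarginal_congr _ _ fun v hv => hag10 v (by simpa using hv)
  have hDR32 : (∫⋯∫⁻_({u} : Finset V), d ∂θ) z3 = (∫⋯∫⁻_({u} : Finset V), d ∂θ) z2 :=
    lmarginal_congr _ _ fun v hv => hag32 v (by simpa using hv)
  rw [hDS10, hDR10] at e1
  rw [hDS20, hDU20] at e2
  rw [hDS31, hDS10, hDU31, hDR32] at e3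
  set c : ℝ≥0∞ := (∫⋯∫⁻_Sfᶜ, d ∂θ) z0 with hc
  have hc0 : c ≠ 0 := (lmarginal_pos hd hdpos _ z0).ne'
  have hcT : c ≠ ∞ := efin
  have hmain : (c * c) * (d z0 * d z3) = (c * c) * (d z1 * d z2) := by
    calc (c * c) * (d z0 * d z3) = (d z0 * c) * (d z3 * c) := by ring
      _ = ((∫⋯∫⁻_(Sfᶜ.erase u), d ∂θ) z0 * (∫⋯∫⁻_({u} : Finset V), d ∂θ) z0)
          * ((∫⋯∫⁻_(Sfᶜ.erase u), d ∂θ) z1 * (∫⋯∫⁻_({u} : Finset V), d ∂θ) z2) := by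
        rw [e0, e3]
      _ = ((∫⋯∫⁻_(Sfᶜ.erase u), d ∂θ) z1 * (∫⋯∫⁻_({u} : Finset V), d ∂θ) z0)
          * ((∫⋯∫⁻_(Sfᶜ.erase u), d ∂θ) z0 * (∫⋯∫⁻_({u} : Finset V), d ∂θ) z2) := by
        ring
      _ = (d z1 * c) * (d z2 * c) := by rw [e1, e2]
      _ = (c * c) * (d z1 * d z2) := by ring
  exact (ENNReal.mul_right_inj (mul_ne_zero hc0 hc0) (ENNReal.mul_ne_top hcT hcT)).mp hmain

end HC2

/-- Second-order Hammersley–Clifford, converse direction: if `μ` has a strictly positive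
density with respect to a product measure and is a second-order Markov random field with
respect to a finite graph `G`, then the density factorizes over the 2-cliques of `G`. -/
theorem twoClique_factorization_of_isMRF2 {V X : Type*} [Fintype V]
    [MeasurableSpace X] [StandardBorelSpace X] [Nonempty X]
    (G : SimpleGraph V) (θ : V → Measure X) [∀ v, IsProbabilityMeasure (θ v)]
    (d : (V → X) → ℝ≥0∞) (hdmeas : Measurable d) (hdpos : ∀ x, 0 < d x)
    (μ : Measure (V → X)) [IsProbabilityMeasure μ]
    (hμ : μ = (Measure.pi θ).withDensity d)
    (hMRF : IsMRF2On G (fun v x => x v) (fun v => measurable_pi_apply v) μ Set.univ) :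
    ∃ f : Finset V → (V → X) → ℝ≥0∞,
      (∀ K, Measurable (f K)) ∧
      (∀ K, ∀ x y : V → X, (∀ v ∈ K, x v = y v) → f K x = f K y) ∧
      μ = (Measure.pi θ).withDensity (fun x => ∏ K ∈ cl2Finset G, f K x) := by
  classical
  subst hμ
  have hd1 : ∫⁻ x, d x ∂(Measure.pi θ) = 1 := by
    have h := measure_univ (μ := (Measure.pi θ).withDensity d)
    rwa [withDensity_apply _ MeasurableSet.univ, Measure.restrict_univ] at h
  set Sfu : V → Finset V := fun u => Finset.univ.filter (fun v => v ∈ graphBdry2 G {u})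
    with hSfudef
  have hSfu : ∀ u v : V, v ∈ Sfu u ↔ v ∈ graphBdry2 G {u} := by
    intro u v
    simp [hSfudef]
  -- the density identity at each vertex, from the Markov property
  have hdeq : ∀ u : V, ∀ᵐ x ∂(Measure.pi θ),
      d x * (∫⋯∫⁻_(Sfu u)ᶜ, d ∂θ) x
        = (∫⋯∫⁻_((Sfu u)ᶜ.erase u), d ∂θ) x * (∫⋯∫⁻_({u} : Finset V), d ∂θ) x := by
    intro u
    refine HC2.density_eq (θ := θ) hdmeas hdpos hd1 (graphBdry2 G {u}) (Sfu u) (hSfu u) u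
      (HC2.not_mem_graphBdry2_self G u) (Set.univ \ ({u} ∪ graphBdry2 G {u}))
      (hm'pf := (measurable_pi_iff.mpr fun v : (graphBdry2 G {u} : Set V) =>
        measurable_pi_apply (v : V)).comap_le) ?_ ?_
    · intro v
      simp only [Set.mem_diff, Set.mem_univ, true_and, Set.mem_union, Set.mem_singleton_iff]
      tauto
    · exact hMRF {u} (Set.toFinite _) (Set.subset_univ _)
  have hDSfin : ∀ u : V, ∀ᵐ x ∂(Measure.pi θ), (∫⋯∫⁻_(Sfu u)ᶜ, d ∂θ) x ≠ ∞ := by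
    intro u
    have hDS1 : ∫⁻ x, (∫⋯∫⁻_(Sfu u)ᶜ, d ∂θ) x ∂(Measure.pi θ) = 1 := by
      have h := HC2.lintegral_mul_eq_lintegral_mul_lmarginal (θ := θ) (Sfu u)
        (g := fun _ => (1:ℝ≥0∞)) measurable_const hdmeas (fun _ _ _ => rfl)
      simpa [hd1] using h.symm
    exact (ae_lt_top (hdmeas.lmarginal _) (by rw [hDS1]; exact ENNReal.one_ne_top)).mono
      fun x hx => hx.ne
  -- almost-everywhere cross identities for all non-adjacent pairs and patterns
  have hcrossAll : ∀ᵐ p ∂((Measure.pi θ).prod (Measure.pi θ)), ∀ u w : V, ∀ B : Finset V,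
      w ≠ u → (¬ (G.Reachable u w ∧ G.dist u w ≤ 2)) → u ∉ B → w ∉ B →
        d (B.piecewise p.2 p.1) * d ((insert u (insert w B)).piecewise p.2 p.1)
          = d ((insert u B).piecewise p.2 p.1) * d ((insert w B).piecewise p.2 p.1) := by
    rw [ae_all_iff]
    intro u
    rw [ae_all_iff]
    intro w
    rw [ae_all_iff]
    intro B
    by_cases h1 : w ≠ u ∧ (¬ (G.Reachable u w ∧ G.dist u w ≤ 2)) ∧ u ∉ B ∧ w ∉ B
    · obtain ⟨hwu, hnadj, huB, hwB⟩ := h1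
      have hwS : w ∉ graphBdry2 G {u} := by
        intro hc
        obtain ⟨hr, hd2⟩ := HC2.reachable_of_mem_graphBdry2 G u w hc
        exact hnadj ⟨hr.symm, by rwa [SimpleGraph.dist_comm] at hd2⟩
      have h := HC2.cross_ae (θ := θ) hdmeas hdpos (Sfu u) u w
        (fun hc => HC2.not_mem_graphBdry2_self G u ((hSfu u u).mp hc))
        (fun hc => hwS ((hSfu u w).mp hc)) hwu (hdeq u) (hDSfin u) B huB hwB
      filter_upwards [h] with p hp
      intro _ _ _ _
      exact hp
    · refine Filter.Eventually.of_forall fun p => ?_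
      intro hwu hnadj huB hwB
      exact absurd ⟨hwu, hnadj, huB, hwB⟩ h1
  have hdfin : ∀ᵐ x ∂(Measure.pi θ), d x ≠ ∞ :=
    (ae_lt_top hdmeas (by rw [hd1]; exact ENNReal.one_ne_top)).mono fun x hx => hx.ne
  have hfinAll : ∀ᵐ p ∂((Measure.pi θ).prod (Measure.pi θ)), ∀ B : Finset V,
      d (B.piecewise p.2 p.1) ≠ ∞ := by
    rw [ae_all_iff]
    intro B
    exact HC2.ae_select' (θ := θ) B ((hdmeas (measurableSet_singleton ∞)).compl) hdfin
  have hGood := hfinAll.and hcrossAll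
  have hGood2 := Measure.ae_ae_of_ae_prod hGood
  haveI : (MeasureTheory.ae (Measure.pi θ)).NeBot :=
    ae_neBot.mpr (IsProbabilityMeasure.ne_zero _)
  obtain ⟨ρ, hρ⟩ := hGood2.exists
  -- define the clique potentials
  set L : Finset V → (V → X) → ℝ :=
    fun B x => Real.log ((d (B.piecewise x ρ)).toReal) with hL
  set φ : Finset V → (V → X) → ℝ :=
    fun K x => ∑ B ∈ K.powerset, (-1:ℝ)^(K.card + B.card) * L B x with hφ
  have hpwm : ∀ B : Finset V, Measurable fun x : V → X => B.piecewise x ρ := by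
    intro B
    refine measurable_pi_lambda _ fun v => ?_
    by_cases hv : v ∈ B
    · simpa [Finset.piecewise, hv] using measurable_pi_apply v
    · simpa [Finset.piecewise, hv] using measurable_const
  have hLm : ∀ B : Finset V, Measurable (L B) := by
    intro B
    exact Real.measurable_log.comp ((hdmeas.comp (hpwm B)).ennreal_toReal)
  refine ⟨fun K x => ENNReal.ofReal (Real.exp (φ K x)), ?_, ?_, ?_⟩
  · intro K
    refine ENNReal.measurable_ofReal.comp (Real.continuous_exp.measurable.comp ?_)
    refine Finset.measurable_sum _ fun B _ => ?_
    exact (hLm B).const_mul _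
  · intro K x y hxy
    have hLB : ∀ B ∈ K.powerset, L B x = L B y := by
      intro B hB
      have hBK : B ⊆ K := Finset.mem_powerset.mp hB
      have : B.piecewise x ρ = B.piecewise y ρ := by
        funext v
        by_cases hv : v ∈ B
        · simp [Finset.piecewise, hv, hxy v (hBK hv)]
        · simp [Finset.piecewise, hv]
      rw [hL]
      simp only
      rw [this]
    simp only [hφ]
    rw [Finset.sum_congr rfl fun B hB => by rw [hLB B hB]]
  · refine withDensity_congr_ae ?_
    filter_upwards [hρ] with x hx
    obtain ⟨hfin, hcross⟩ := hx
    have hdxfin : d x ≠ ∞ := by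
      have h := hfin Finset.univ
      rwa [Finset.piecewise_univ] at h
    have hpos : ∀ B : Finset V, 0 < (d (B.piecewise x ρ)).toReal :=
      fun B => ENNReal.toReal_pos (hdpos _).ne' (hfin B)
    have hcrossL : ∀ u w : V, ¬(G.Reachable u w ∧ G.dist u w ≤ 2) → w ≠ u →
        ∀ B : Finset V, u ∉ B → w ∉ B →
          L B x + L (insert u (insert w B)) x = L (insert u B) x + L (insert w B) x := by
      intro u w hnadj hwu B huB hwB
      have h := hcross u w B hwu hnadj huB hwB
      have htr : (d (B.piecewise x ρ)).toReal
            * (d ((insert u (insert w B)).piecewise x ρ)).toReal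
          = (d ((insert u B).piecewise x ρ)).toReal
            * (d ((insert w B).piecewise x ρ)).toReal := by
        rw [← ENNReal.toReal_mul, ← ENNReal.toReal_mul, h]
      rw [hL]
      simp only
      rw [← Real.log_mul (hpos _).ne' (hpos _).ne', ← Real.log_mul (hpos _).ne' (hpos _).ne',
        htr]
    have hvanish : ∀ A : Finset V, ¬ TwoClique G (A : Set V) → φ A x = 0 := by
      intro A hA
      rw [TwoClique] at hA
      push_neg at hA
      obtain ⟨u, hu, w, hw, hwu, hnadj⟩ := hA
      have hnadj' : ¬(G.Reachable u w ∧ G.dist u w ≤ 2) :=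
        fun hc => (not_lt.mpr hc.2) (hnadj hc.1)
      exact HC2.sum_zero_of_pair (fun B => L B x) A u w (Finset.mem_coe.mp hu)
        (Finset.mem_coe.mp hw) hwu
        (fun B huB hwB => hcrossL u w hnadj' (Ne.symm hwu) B huB hwB)
    have hstep : ∑ K ∈ cl2Finset G, φ K x = Real.log ((d x).toReal) := by
      rw [Finset.sum_subset (Finset.subset_univ _) (fun K _ hK => hvanish K (by
        intro hc
        exact hK (by simp [cl2Finset, hc])))]
      have hpu : (Finset.univ : Finset (Finset V)) = (Finset.univ : Finset V).powerset :=
        Finset.powerset_univ.symm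
      rw [hpu]
      have hLuniv : L Finset.univ x = Real.log ((d x).toReal) := by
        rw [hL]
        simp only
        rw [Finset.piecewise_univ]
      rw [← hLuniv]
      exact HC2.mobius_inversion (Finset.univ : Finset V) (fun B => L B x)
    have hexp : Real.exp (∑ K ∈ cl2Finset G, φ K x) = (d x).toReal := by
      rw [hstep, Real.exp_log (ENNReal.toReal_pos (hdpos x).ne' hdxfin)]
    calc d x = ENNReal.ofReal ((d x).toReal) := (ENNReal.ofReal_toReal hdxfin).symm
      _ = ENNReal.ofReal (Real.exp (∑ K ∈ cl2Finset G, φ K x)) := by rw [hexp]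
      _ = ENNReal.ofReal (∏ K ∈ cl2Finset G, Real.exp (φ K x)) := by rw [Real.exp_sum]
      _ = ∏ K ∈ cl2Finset G, ENNReal.ofReal (Real.exp (φ K x)) :=
        ENNReal.ofReal_prod_of_nonneg fun i _ => (Real.exp_pos _).le
end

section
/- Let G = (V,E,o) be a rooted locally finite graph and n ≥ 4. Set V_n = {v : d(v,o) ≤ n}, U_n = V_n \ V_{n-2}, and define G_n = (V_n, E_n) where E_n consists of the edges of G within V_n together with all pairs of distinct vertices of U_n. Then for every A ⊆ V_{n-3}, the second boundary of A in G equals the second boundary of A in G_n: ∂²_G A = ∂²_{G_n} A. Moreover, for any A' ⊆ V_{n-2}, ∂²_G A' ⊆ ∂²_{G_n} A'. -/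
open MeasureTheory ProbabilityTheory

variable {V : Type*}

/-- The ball of radius `n` around the root `o` in `G`. -/
def gball {V : Type*} (G : SimpleGraph V) (o : V) (n : ℕ) : Set V :=
  {v | G.Reachable o v ∧ G.dist o v ≤ n}

/-- The augmented ball graph `G_n`: the edges of `G` inside the ball `V_n` of radius `n`
about the root, together with all pairs of distinct vertices of the annulus
`U_n = V_n \ V_{n-2}`. -/
def augGraph {V : Type*} (G : SimpleGraph V) (o : V) (n : ℕ) : SimpleGraph V where
  Adj u v := (u ∈ gball G o n ∧ v ∈ gball G o n ∧ G.Adj u v) ∨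
    (u ∈ gball G o n \ gball G o (n - 2) ∧ v ∈ gball G o n \ gball G o (n - 2) ∧ u ≠ v)
  symm := by
    constructor
    rintro u v (⟨h1, h2, h3⟩ | ⟨h1, h2, h3⟩)
    · exact Or.inl ⟨h2, h1, h3.symm⟩
    · exact Or.inr ⟨h2, h1, h3.symm⟩
  loopless := by
    constructor
    rintro u (⟨-, -, h⟩ | ⟨-, -, h⟩)
    · exact G.loopless.irrefl u h
    · exact h rfl

lemma mem_gball_succ_of_adj {G : SimpleGraph V} {o v u : V} {m : ℕ}
    (hv : v ∈ gball G o m) (h : G.Adj v u) : u ∈ gball G o (m + 1) := by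
  obtain ⟨hr, hd⟩ := hv
  refine ⟨hr.trans h.reachable, ?_⟩
  have h1 : G.edist v u = 1 := SimpleGraph.edist_eq_one_iff_adj.mpr h
  have ht := G.edist_triangle (u := o) (v := v) (w := u)
  rw [h1] at ht
  have hne : G.edist o v ≠ ⊤ := SimpleGraph.edist_ne_top_iff_reachable.mpr hr
  have : G.dist o u ≤ G.dist o v + 1 := by
    have := ENat.toNat_le_toNat ht (WithTop.add_ne_top.mpr ⟨hne, ENat.one_ne_top⟩)
    simpa [SimpleGraph.dist, ENat.toNat_add hne] using this
  omega

lemma gball_mono {G : SimpleGraph V} {o : V} {m k : ℕ} (h : m ≤ k) :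
    gball G o m ⊆ gball G o k := fun _ ⟨hr, hd⟩ => ⟨hr, hd.trans h⟩

/-- The boundary of a subset of the `m`-ball lies in the `(m+1)`-ball. -/
lemma bdry_subset_ball {G : SimpleGraph V} {o : V} {m : ℕ} {A : Set V}
    (hA : A ⊆ gball G o m) : graphBdry G A ⊆ gball G o (m + 1) := by
  rintro u ⟨-, v, hvA, huv⟩
  exact mem_gball_succ_of_adj (hA hvA) huv.symm

/-- Key fact (b): for `A ⊆ V_{n-1}`, `∂_G A ⊆ ∂_{G_n} A`. -/
lemma bdry_subset_bdry_aug {G : SimpleGraph V} {o : V} {n : ℕ} (hn : 1 ≤ n) {A : Set V}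
    (hA : A ⊆ gball G o (n - 1)) : graphBdry G A ⊆ graphBdry (augGraph G o n) A := by
  rintro u ⟨huA, v, hvA, huv⟩
  refine ⟨huA, v, hvA, Or.inl ⟨?_, gball_mono (Nat.sub_le n 1) (hA hvA), huv⟩⟩
  have := mem_gball_succ_of_adj (hA hvA) huv.symm
  exact gball_mono (by omega) this

/-- Key fact (a): for `A ⊆ V_{n-2}`, `∂_G A = ∂_{G_n} A`. -/
lemma bdry_eq_bdry_aug {G : SimpleGraph V} {o : V} {n : ℕ} (hn : 2 ≤ n) {A : Set V}
    (hA : A ⊆ gball G o (n - 2)) : graphBdry G A = graphBdry (augGraph G o n) A := by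
  apply Set.Subset.antisymm
  · exact bdry_subset_bdry_aug (by omega)
      (hA.trans (gball_mono (by omega)))
  · rintro u ⟨huA, v, hvA, (⟨-, -, huv⟩ | ⟨-, hv, -⟩)⟩
    · exact ⟨huA, v, hvA, huv⟩
    · exact absurd (hA hvA) hv.2

/-- For `A ⊆ V_{n-3}`, the second boundary of `A` in `G` equals the second boundary of `A`
in the augmented ball graph `G_n`; moreover for `A' ⊆ V_{n-2}`, `∂²_G A' ⊆ ∂²_{G_n} A'`. -/
theorem bdry2_augGraph (G : SimpleGraph V) [G.LocallyFinite] (o : V) (n : ℕ) (hn : 4 ≤ n) :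
    (∀ A : Set V, A ⊆ gball G o (n - 3) →
      graphBdry2 G A = graphBdry2 (augGraph G o n) A) ∧
    (∀ A' : Set V, A' ⊆ gball G o (n - 2) →
      graphBdry2 G A' ⊆ graphBdry2 (augGraph G o n) A') := by
  constructor
  · intro A hA
    have hA2 : A ⊆ gball G o (n - 2) := hA.trans (gball_mono (by omega))
    have h1 : graphBdry G A = graphBdry (augGraph G o n) A :=
      bdry_eq_bdry_aug (by omega) hA2
    have hB : graphBdry G A ⊆ gball G o (n - 2) := by
      have := bdry_subset_ball hA
      exact this.trans (gball_mono (by omega))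
    have hAB : A ∪ graphBdry G A ⊆ gball G o (n - 2) := Set.union_subset hA2 hB
    have h2 : graphBdry G (A ∪ graphBdry G A)
        = graphBdry (augGraph G o n) (A ∪ graphBdry (augGraph G o n) A) := by
      rw [← h1]; exact bdry_eq_bdry_aug (by omega) hAB
    unfold graphBdry2
    rw [h2, h1]
  · intro A hA
    have h1 : graphBdry G A = graphBdry (augGraph G o n) A :=
      bdry_eq_bdry_aug (by omega) hA
    have hB : graphBdry G A ⊆ gball G o (n - 1) := by
      have := bdry_subset_ball hA
      exact this.trans (gball_mono (by omega))
    have hAB : A ∪ graphBdry G A ⊆ gball G o (n - 1) :=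
      Set.union_subset (hA.trans (gball_mono (by omega))) hB
    have h2 : graphBdry G (A ∪ graphBdry G A)
        ⊆ graphBdry (augGraph G o n) (A ∪ graphBdry (augGraph G o n) A) := by
      rw [← h1]; exact bdry_subset_bdry_aug (by omega) hAB
    unfold graphBdry2
    exact Set.union_subset_union h1.le h2
end

section
/- Let G = (V,E,o) be a rooted locally finite graph, n ≥ 4, V_n = {v : d(v,o) ≤ n}, U_n = V_n \ V_{n-2}, and G_n = (V_n, E_n) with E_n the edges of G inside V_n together with all pairs of distinct vertices of U_n. Then the graph distance in G_n satisfies d_{G_n}(u,v) ≤ d_G(u,v) for all u,v ∈ V_n; consequently, every 2-clique K of G with K ⊆ V_n is also a 2-clique of G_n. -/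
open MeasureTheory ProbabilityTheory

variable {V : Type*}

/-- If `x` is in the ball of radius `m` and `x ~ y`, then `y` is in the ball of radius `m+1`. -/
lemma gball_adj {G : SimpleGraph V} {o x y : V} {m : ℕ}
    (hx : x ∈ gball G o m) (h : G.Adj x y) : y ∈ gball G o (m + 1) := by
  obtain ⟨hr, hd⟩ := hx
  refine ⟨hr.trans h.reachable, ?_⟩
  obtain ⟨p, hp⟩ := hr.exists_walk_length_eq_dist
  calc G.dist o y ≤ (p.concat h).length := SimpleGraph.dist_le _
    _ = p.length + 1 := p.length_concat h
    _ ≤ m + 1 := by omega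

/-- First re-entry lemma: a walk from outside the ball `V_n` to a vertex of `V_n`
passes through a vertex of the annulus, leaving a strictly shorter suffix walk. -/
lemma first_reentry {G : SimpleGraph V} {o : V} {n : ℕ} (hn : 1 ≤ n) :
    ∀ {w v : V} (q : G.Walk w v), w ∉ gball G o n → v ∈ gball G o n →
      ∃ (x : V) (r : G.Walk x v), x ∈ gball G o n ∧ x ∉ gball G o (n - 2) ∧
        r.length + 1 ≤ q.length := by
  intro w v q
  induction q with
  | nil => intro hw hv; exact absurd hv hw
  | @cons w w' v h q' ih =>
    intro hw hv
    by_cases hw' : w' ∈ gball G o n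
    · refine ⟨w', q', hw', ?_, by simp⟩
      intro hmem
      have : w ∈ gball G o (n - 2 + 1) := gball_adj hmem h.symm
      exact hw ⟨this.1, le_trans this.2 (by omega)⟩
    · obtain ⟨x, r, hx1, hx2, hlen⟩ := ih hw' hv
      exact ⟨x, r, hx1, hx2, by simp; omega⟩

/-- Main lemma: any `G`-walk between vertices of `V_n` can be replaced by an
`augGraph`-walk that is no longer. -/
lemma aug_walk {G : SimpleGraph V} {o : V} {n : ℕ} (hn : 1 ≤ n) :
    ∀ (k : ℕ) {u v : V} (p : G.Walk u v), p.length ≤ k →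
      u ∈ gball G o n → v ∈ gball G o n →
      ∃ p' : (augGraph G o n).Walk u v, p'.length ≤ p.length := by
  intro k
  induction k with
  | zero =>
    intro u v p hp hu hv
    have : p.length = 0 := by omega
    cases p.eq_of_length_eq_zero this
    exact ⟨SimpleGraph.Walk.nil, by simp⟩
  | succ k ih =>
    intro u v p hp hu hv
    cases p with
    | nil => exact ⟨SimpleGraph.Walk.nil, by simp⟩
    | @cons _ w _ h q =>
      by_cases hw : w ∈ gball G o n
      · obtain ⟨q', hq'⟩ := ih q (by simpa using hp) hw hv
        refine ⟨SimpleGraph.Walk.cons (Or.inl ⟨hu, hw, h⟩) q', ?_⟩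
        rw [SimpleGraph.Walk.length_cons]; exact Nat.succ_le_succ hq'
      · -- `u` is in the annulus
        have hu2 : u ∉ gball G o (n - 2) := by
          intro hmem
          have : w ∈ gball G o (n - 2 + 1) := gball_adj hmem h
          exact hw ⟨this.1, le_trans this.2 (by omega)⟩
        obtain ⟨x, r, hx1, hx2, hlen⟩ := first_reentry hn q hw hv
        obtain ⟨r', hr'⟩ := ih r (by simp at hp; omega) hx1 hv
        by_cases hux : u = x
        · subst hux
          exact ⟨r', by simp; omega⟩
        · refine ⟨SimpleGraph.Walk.cons (Or.inr ⟨⟨hu, hu2⟩, ⟨hx1, hx2⟩, hux⟩) r', ?_⟩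
          rw [SimpleGraph.Walk.length_cons]; exact Nat.succ_le_succ (le_trans hr' (by omega))

/-- The graph distance in the augmented ball graph `G_n` is at most the graph distance
in `G` on the ball `V_n`; consequently every 2-clique of `G` contained in `V_n` is also a
2-clique of `G_n`. -/
theorem dist_augGraph_le (G : SimpleGraph V) [G.LocallyFinite] (o : V) (n : ℕ) (hn : 4 ≤ n) :
    (∀ u ∈ gball G o n, ∀ v ∈ gball G o n,
      (augGraph G o n).Reachable u v ∧ (augGraph G o n).dist u v ≤ G.dist u v) ∧
    (∀ K : Set V, K ⊆ gball G o n → TwoClique G K → TwoClique (augGraph G o n) K) := by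
  have hn1 : 1 ≤ n := by omega
  have main : ∀ u ∈ gball G o n, ∀ v ∈ gball G o n,
      (augGraph G o n).Reachable u v ∧ (augGraph G o n).dist u v ≤ G.dist u v := by
    intro u hu v hv
    have hr : G.Reachable u v := hu.1.symm.trans hv.1
    obtain ⟨p, hp⟩ := hr.exists_walk_length_eq_dist
    obtain ⟨p', hp'⟩ := aug_walk hn1 p.length p le_rfl hu hv
    exact ⟨p'.reachable, le_trans (SimpleGraph.dist_le p') (by omega)⟩
  refine ⟨main, ?_⟩
  intro K hK hcl u hu v hv huv
  obtain ⟨hr, hd⟩ := hcl u hu v hv huv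
  obtain ⟨hr', hd'⟩ := main u (hK hu) v (hK hv)
  exact ⟨hr', le_trans hd' hd⟩
end
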